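/- arXiv:2103.04898 — 9 statements merged into one kernel-verified Lean document; each statement's English description precedes it below -/
import Mathlib

section
/- If asset j is dominant, then for every rebalancing period n ≥ 1 the all-in weight e_j (the j-th standard basis vector of ℝ^m) is log-optimal: for every K ∈ 𝒦 one has g_n(K) ≤ g_n(e_j), and moreover g_n(e_j) = E[log(1 + X_j(0))]; in particular g_n* = g_1* = E[log(1 + X_j(0))] for all n ≥ 1. -/
open MeasureTheory ProbabilityTheory Filter Finset Real

/-- Compound (total) return of asset `i` over the first `n` periods:
`R_{n,i}(ω) = ∏_{k=0}^{n-1} (1 + X_i(k)(ω))`. -/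
noncomputable def compoundReturn {Ω : Type*} {m : ℕ} (X : ℕ → Ω → Fin m → ℝ)
    (n : ℕ) (ω : Ω) (i : Fin m) : ℝ :=
  ∏ k ∈ Finset.range n, (1 + X k ω i)

/-- Expected logarithmic growth with rebalancing period `n`:
`g_n(K) = (1/n) E[log (Kᵀ R_n)]`. -/
noncomputable def elg {Ω : Type*} [MeasureSpace Ω] {m : ℕ} (X : ℕ → Ω → Fin m → ℝ)
    (n : ℕ) (K : Fin m → ℝ) : ℝ :=
  (n : ℝ)⁻¹ * ∫ ω, Real.log (∑ i, K i * compoundReturn X n ω i)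

/-- The admissible set: the unit simplex in `ℝ^m`. -/
def simplex (m : ℕ) : Set (Fin m → ℝ) := {K | (∀ i, 0 ≤ K i) ∧ ∑ i, K i = 1}

lemma aux_abs_log_le {a b x : ℝ} (ha : 0 < a) (hax : a ≤ x) (hxb : x ≤ b) :
    |Real.log x| ≤ max |Real.log a| |Real.log b| := by
  have h1 : Real.log a ≤ Real.log x := Real.log_le_log ha hax
  have h2 : Real.log x ≤ Real.log b := Real.log_le_log (ha.trans_le hax) hxb
  rw [abs_le]
  exact ⟨le_trans (neg_le_neg (le_max_left _ _)) ((neg_abs_le _).trans h1),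
    h2.trans ((le_abs_self _).trans (le_max_right _ _))⟩

lemma aux_integrable_of_ae_bound {Ω : Type*} [MeasureSpace Ω]
    [IsProbabilityMeasure (ℙ : Measure Ω)] {f : Ω → ℝ}
    (hf : AEStronglyMeasurable f (ℙ : Measure Ω)) {C : ℝ}
    (h : ∀ᵐ ω ∂(ℙ : Measure Ω), |f ω| ≤ C) : Integrable f (ℙ : Measure Ω) :=
  Integrable.mono' (integrable_const C) hf (by simpa [Real.norm_eq_abs] using h)

/-- Integral of a product of independent random variables over `Finset.range`. -/
lemma aux_integral_prod_range {Ω : Type*} [MeasureSpace Ω]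
    [IsProbabilityMeasure (ℙ : Measure Ω)] (Z : ℕ → Ω → ℝ)
    (hZmeas : ∀ k, Measurable (Z k))
    (hZindep : iIndepFun Z (ℙ : Measure Ω)) (N : ℕ) :
    ∫ ω, ∏ k ∈ Finset.range N, Z k ω = ∏ k ∈ Finset.range N, ∫ ω, Z k ω := by
  induction N with
  | zero => simp
  | succ N ih =>
    have hfm : AEStronglyMeasurable (∏ k ∈ Finset.range N, Z k) (ℙ : Measure Ω) := by
      have : (∏ k ∈ Finset.range N, Z k) = fun ω => ∏ k ∈ Finset.range N, Z k ω := by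
        funext ω; simp [Finset.prod_apply]
      rw [this]
      exact (Finset.measurable_prod _ fun k _ => hZmeas k).aestronglyMeasurable
    have h := (hZindep.indepFun_prod_range_succ hZmeas N).integral_mul_eq_mul_integral hfm
      (hZmeas N).aestronglyMeasurable
    calc ∫ ω, ∏ k ∈ Finset.range (N + 1), Z k ω
        = ∫ ω, ((∏ k ∈ Finset.range N, Z k) * Z N) ω := by
          congr 1; funext ω; simp [Finset.prod_range_succ, Finset.prod_apply]
      _ = (∫ ω, (∏ k ∈ Finset.range N, Z k) ω) * ∫ ω, Z N ω := h
      _ = (∫ ω, ∏ k ∈ Finset.range N, Z k ω) * ∫ ω, Z N ω := by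
          congr 1; congr 1; funext ω; simp [Finset.prod_apply]
      _ = ∏ k ∈ Finset.range (N + 1), ∫ ω, Z k ω := by
          rw [ih, Finset.prod_range_succ]

/-- **Dominant Asset Theorem (sufficiency).** If asset `j` is dominant, then for every
rebalancing period `n ≥ 1` the all-in weight `e_j` is log-optimal over the simplex,
`g_n(e_j) = E[log (1 + X_j(0))]`, and hence `g_n^* = g_1^* = E[log (1 + X_j(0))]`. -/
theorem dominant_asset_log_optimal
    {Ω : Type*} [MeasureSpace Ω] [IsProbabilityMeasure (ℙ : Measure Ω)]
    {m : ℕ} (hm : 2 ≤ m)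
    (X : ℕ → Ω → Fin m → ℝ)
    (hmeas : ∀ k, Measurable (X k))
    (hiid : iIndepFun X ℙ)
    (hident : ∀ k, IdentDistrib (X k) (X 0) ℙ ℙ)
    (Xmin Xmax : Fin m → ℝ)
    (hXmin : ∀ i, -1 < Xmin i)
    (hbdd : ∀ k, ∀ᵐ ω ∂(ℙ : Measure Ω), ∀ i, Xmin i ≤ X k ω i ∧ X k ω i ≤ Xmax i)
    (j : Fin m)
    (hdom : ∀ i, i ≠ j → ∫ ω, (1 + X 0 ω i) / (1 + X 0 ω j) ≤ 1) :
    (∀ n : ℕ, 1 ≤ n → ∀ K ∈ simplex m, elg X n K ≤ elg X n (Pi.single j 1)) ∧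
    (∀ n : ℕ, 1 ≤ n → elg X n (Pi.single j 1) = ∫ ω, Real.log (1 + X 0 ω j)) ∧
    (∀ n : ℕ, 1 ≤ n →
      sSup (elg X n '' simplex m) = ∫ ω, Real.log (1 + X 0 ω j)) := by
  haveI : Nonempty (Fin m) := ⟨⟨0, by omega⟩⟩
  have hne : (Finset.univ : Finset (Fin m)).Nonempty := Finset.univ_nonempty
  have hc : ∀ i, (0:ℝ) < 1 + Xmin i := fun i => by linarith [hXmin i]
  have hGae : ∀ᵐ ω ∂(ℙ : Measure Ω), ∀ k i, Xmin i ≤ X k ω i ∧ X k ω i ≤ Xmax i :=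
    ae_all_iff.2 hbdd
  have hMinMax : ∀ i, Xmin i ≤ Xmax i := by
    obtain ⟨ω₀, h₀⟩ := hGae.exists
    exact fun i => (h₀ 0 i).1.trans (h₀ 0 i).2
  have hC : ∀ i, (0:ℝ) < 1 + Xmax i := fun i => lt_of_lt_of_le (hc i) (by linarith [hMinMax i])
  -- pointwise consequences of the bounds
  have posY : ∀ {ω}, (∀ k i, Xmin i ≤ X k ω i ∧ X k ω i ≤ Xmax i) →
      ∀ k i, (0:ℝ) < 1 + X k ω i := by
    intro ω hG k i; have := hXmin i; have := (hG k i).1; linarith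
  have hRlow : ∀ {ω}, (∀ k i, Xmin i ≤ X k ω i ∧ X k ω i ≤ Xmax i) →
      ∀ n i, (1 + Xmin i) ^ n ≤ compoundReturn X n ω i := by
    intro ω hG n i
    calc (1 + Xmin i) ^ n = ∏ _k ∈ Finset.range n, (1 + Xmin i) := by simp
      _ ≤ _ := Finset.prod_le_prod (fun _ _ => (hc i).le) (fun k _ => by linarith [(hG k i).1])
  have hRhigh : ∀ {ω}, (∀ k i, Xmin i ≤ X k ω i ∧ X k ω i ≤ Xmax i) →
      ∀ n i, compoundReturn X n ω i ≤ (1 + Xmax i) ^ n := by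
    intro ω hG n i
    calc compoundReturn X n ω i
        ≤ ∏ _k ∈ Finset.range n, (1 + Xmax i) :=
          Finset.prod_le_prod (fun k _ => (posY hG k i).le) (fun k _ => by linarith [(hG k i).2])
      _ = (1 + Xmax i) ^ n := by simp
  have hRpos : ∀ {ω}, (∀ k i, Xmin i ≤ X k ω i ∧ X k ω i ≤ Xmax i) →
      ∀ n i, (0:ℝ) < compoundReturn X n ω i := fun hG n i =>
    lt_of_lt_of_le (pow_pos (hc i) n) (hRlow hG n i)
  -- measurability
  have hYmeas : ∀ k i, Measurable fun ω => 1 + X k ω i := fun k i =>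
    measurable_const.add ((measurable_pi_apply i).comp (hmeas k))
  have hRmeas : ∀ n i, Measurable fun ω => compoundReturn X n ω i := fun n i =>
    Finset.measurable_prod _ fun k _ => hYmeas k i
  have hSmeas : ∀ n (K : Fin m → ℝ), Measurable fun ω => ∑ i, K i * compoundReturn X n ω i :=
    fun n K => Finset.measurable_sum _ fun i _ => (hRmeas n i).const_mul (K i)
  -- the all-in weight picks out asset j
  have hej : ∀ n ω, ∑ i, (Pi.single j 1 : Fin m → ℝ) i * compoundReturn X n ω i = compoundReturn X n ω j := by
    intro n ω
    rw [Finset.sum_eq_single j (fun i _ hij => by rw [Pi.single_eq_of_ne hij, zero_mul])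
      (fun h => absurd (Finset.mem_univ j) h)]
    simp
  -- integrability of log(1 + X k · j)
  have int_logY : ∀ k, Integrable (fun ω => Real.log (1 + X k ω j)) (ℙ : Measure Ω) := by
    intro k
    refine aux_integrable_of_ae_bound (Real.measurable_log.comp (hYmeas k j)).aestronglyMeasurable
      (C := max |Real.log (1 + Xmin j)| |Real.log (1 + Xmax j)|)
      ((hbdd k).mono fun ω h => ?_)
    exact aux_abs_log_le (hc j) (by linarith [(h j).1]) (by linarith [(h j).2])
  -- integrability of log of compound return of asset j
  have int_logRj : ∀ n, Integrable (fun ω => Real.log (compoundReturn X n ω j)) (ℙ : Measure Ω) := by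
    intro n
    refine aux_integrable_of_ae_bound
      (Real.measurable_log.comp (hRmeas n j)).aestronglyMeasurable
      (C := max |Real.log ((1 + Xmin j) ^ n)| |Real.log ((1 + Xmax j) ^ n)|)
      (hGae.mono fun ω hG => ?_)
    exact aux_abs_log_le (pow_pos (hc j) n) (hRlow hG n j) (hRhigh hG n j)
  -- key identity: E[log R_{n,j}] = n E[log(1+X_j(0))]
  have B : ∀ n : ℕ, ∫ ω, Real.log (compoundReturn X n ω j)
      = (n : ℝ) * ∫ ω, Real.log (1 + X 0 ω j) := by
    intro n
    have h1 : ∫ ω, Real.log (compoundReturn X n ω j)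
        = ∫ ω, ∑ k ∈ Finset.range n, Real.log (1 + X k ω j) := by
      refine integral_congr_ae (hGae.mono fun ω hG => ?_)
      exact Real.log_prod fun k _ => (posY hG k j).ne'
    have h2 : ∀ k : ℕ, ∫ ω, Real.log (1 + X k ω j) = ∫ ω, Real.log (1 + X 0 ω j) := by
      intro k
      have hu : Measurable fun v : Fin m → ℝ => Real.log (1 + v j) :=
        Real.measurable_log.comp (measurable_const.add (measurable_pi_apply j))
      exact ((hident k).comp hu).integral_eq
    rw [h1, integral_finset_sum _ fun k _ => int_logY k]
    simp [h2]
  -- core inequality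
  have core : ∀ n : ℕ, ∀ K ∈ simplex m,
      ∫ ω, Real.log (∑ i, K i * compoundReturn X n ω i)
        ≤ ∫ ω, Real.log (compoundReturn X n ω j) := by
    intro n K hK
    obtain ⟨hK0, hK1⟩ := hK
    set a : ℝ := Finset.univ.inf' hne fun i => (1 + Xmin i) ^ n with ha_def
    set b : ℝ := Finset.univ.sup' hne fun i => (1 + Xmax i) ^ n with hb_def
    have ha : 0 < a := by
      rw [ha_def]; exact (Finset.lt_inf'_iff _).2 fun i _ => pow_pos (hc i) n
    have hainf : ∀ i : Fin m, a ≤ (1 + Xmin i) ^ n := fun i => by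
      rw [ha_def]; exact Finset.inf'_le _ (Finset.mem_univ i)
    have hbsup : ∀ i : Fin m, (1 + Xmax i) ^ n ≤ b := fun i => by
      rw [hb_def]; exact Finset.le_sup' (fun i : Fin m => (1 + Xmax i) ^ n) (Finset.mem_univ i)
    have hSae : ∀ᵐ ω ∂(ℙ : Measure Ω),
        a ≤ (∑ i, K i * compoundReturn X n ω i)
        ∧ (∑ i, K i * compoundReturn X n ω i) ≤ b
        ∧ (0:ℝ) < compoundReturn X n ω j := by
      refine hGae.mono fun ω hG => ⟨?_, ?_, hRpos hG n j⟩
      · calc a = ∑ i, K i * a := by rw [← Finset.sum_mul, hK1, one_mul]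
          _ ≤ ∑ i, K i * compoundReturn X n ω i :=
            Finset.sum_le_sum fun i _ => mul_le_mul_of_nonneg_left
              ((hainf i).trans (hRlow hG n i)) (hK0 i)
      · calc (∑ i, K i * compoundReturn X n ω i) ≤ ∑ i, K i * b :=
            Finset.sum_le_sum fun i _ => mul_le_mul_of_nonneg_left
              ((hRhigh hG n i).trans (hbsup i)) (hK0 i)
          _ = b := by rw [← Finset.sum_mul, hK1, one_mul]
    have int_logS : Integrable (fun ω => Real.log (∑ i, K i * compoundReturn X n ω i))
        (ℙ : Measure Ω) := by
      refine aux_integrable_of_ae_bound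
        (Real.measurable_log.comp (hSmeas n K)).aestronglyMeasurable
        (C := max |Real.log a| |Real.log b|) (hSae.mono fun ω h => ?_)
      exact aux_abs_log_le ha h.1 h.2.1
    -- ratios
    have hPmeas : ∀ i, Measurable fun ω => compoundReturn X n ω i / compoundReturn X n ω j :=
      fun i => (hRmeas n i).div (hRmeas n j)
    have int_P : ∀ i, Integrable
        (fun ω => compoundReturn X n ω i / compoundReturn X n ω j) (ℙ : Measure Ω) := by
      intro i
      refine aux_integrable_of_ae_bound (hPmeas i).aestronglyMeasurable
        (C := (1 + Xmax i) ^ n / (1 + Xmin j) ^ n) (hGae.mono fun ω hG => ?_)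
      rw [abs_of_nonneg (div_nonneg (hRpos hG n i).le (hRpos hG n j).le)]
      exact div_le_div₀ (pow_nonneg (hC i).le n) (hRhigh hG n i) (pow_pos (hc j) n) (hRlow hG n j)
    have hrw : ∀ ω, (∑ i, K i * compoundReturn X n ω i) / compoundReturn X n ω j
        = ∑ i, K i * (compoundReturn X n ω i / compoundReturn X n ω j) := by
      intro ω; rw [Finset.sum_div]; exact Finset.sum_congr rfl fun i _ => mul_div_assoc _ _ _
    have int_SdivRj : Integrable
        (fun ω => (∑ i, K i * compoundReturn X n ω i) / compoundReturn X n ω j)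
        (ℙ : Measure Ω) := by
      simp only [hrw]
      exact integrable_finset_sum _ fun i _ => (int_P i).const_mul (K i)
    have int_logdiv : Integrable
        (fun ω => Real.log ((∑ i, K i * compoundReturn X n ω i) / compoundReturn X n ω j))
        (ℙ : Measure Ω) := by
      refine (int_logS.sub (int_logRj n)).congr (hSae.mono fun ω h => ?_)
      simp only [Pi.sub_apply]
      rw [Real.log_div (ha.trans_le h.1).ne' h.2.2.ne']
    have step1 : ∫ ω, Real.log (∑ i, K i * compoundReturn X n ω i)
        = (∫ ω, Real.log (compoundReturn X n ω j))
          + ∫ ω, Real.log ((∑ i, K i * compoundReturn X n ω i) / compoundReturn X n ω j) := by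
      rw [← integral_add (int_logRj n) int_logdiv]
      refine integral_congr_ae (hSae.mono fun ω h => ?_)
      dsimp only
      rw [Real.log_div (ha.trans_le h.1).ne' h.2.2.ne']
      ring
    have step2 : ∫ ω, Real.log ((∑ i, K i * compoundReturn X n ω i) / compoundReturn X n ω j)
        ≤ (∫ ω, (∑ i, K i * compoundReturn X n ω i) / compoundReturn X n ω j) - 1 := by
      calc ∫ ω, Real.log ((∑ i, K i * compoundReturn X n ω i) / compoundReturn X n ω j)
          ≤ ∫ ω, ((∑ i, K i * compoundReturn X n ω i) / compoundReturn X n ω j - 1) := by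
            refine integral_mono_ae int_logdiv (int_SdivRj.sub (integrable_const 1))
              (hSae.mono fun ω h => ?_)
            exact Real.log_le_sub_one_of_pos (div_pos (ha.trans_le h.1) h.2.2)
        _ = _ := by
            rw [integral_sub int_SdivRj (integrable_const 1)]
            simp
    have step3 : ∫ ω, (∑ i, K i * compoundReturn X n ω i) / compoundReturn X n ω j ≤ 1 := by
      have hsplit : ∫ ω, (∑ i, K i * compoundReturn X n ω i) / compoundReturn X n ω j
          = ∑ i, K i * ∫ ω, compoundReturn X n ω i / compoundReturn X n ω j := by
        simp only [hrw]
        rw [integral_finset_sum _ fun i _ => (int_P i).const_mul (K i)]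
        exact Finset.sum_congr rfl fun i _ => integral_const_mul _ _
      rw [hsplit, ← hK1]
      refine Finset.sum_le_sum fun i _ => ?_
      by_cases hij : i = j
      · subst hij
        have : ∫ ω, compoundReturn X n ω i / compoundReturn X n ω i = 1 := by
          rw [integral_congr_ae (hGae.mono fun ω hG => div_self (hRpos hG n i).ne')]
          simp
        rw [this, mul_one]
      · -- independence argument
        set Z : ℕ → Ω → ℝ := fun k ω => (1 + X k ω i) / (1 + X k ω j) with hZ_def
        have hZmeas : ∀ k, Measurable (Z k) := fun k => (hYmeas k i).div (hYmeas k j)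
        have hg : Measurable fun v : Fin m → ℝ => (1 + v i) / (1 + v j) :=
          (measurable_const.add (measurable_pi_apply i)).div
            (measurable_const.add (measurable_pi_apply j))
        have hZindep : iIndepFun Z (ℙ : Measure Ω) :=
          hiid.comp (fun _ v => (1 + v i) / (1 + v j)) fun _ => hg
        have hZident : ∀ k, ∫ ω, Z k ω = ∫ ω, Z 0 ω := fun k =>
          ((hident k).comp hg).integral_eq
        have hZ0nonneg : 0 ≤ ∫ ω, Z 0 ω := by
          refine integral_nonneg_of_ae (hGae.mono fun ω hG => ?_)
          exact div_nonneg (posY hG 0 i).le (posY hG 0 j).le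
        have hZ0le : ∫ ω, Z 0 ω ≤ 1 := hdom i hij
        have hPprod : ∫ ω, compoundReturn X n ω i / compoundReturn X n ω j
            = (∫ ω, Z 0 ω) ^ n := by
          have heq : ∀ ω, compoundReturn X n ω i / compoundReturn X n ω j
              = ∏ k ∈ Finset.range n, Z k ω := by
            intro ω
            simp only [compoundReturn, hZ_def]
            rw [Finset.prod_div_distrib]
          simp only [heq]
          rw [aux_integral_prod_range Z hZmeas hZindep n]
          simp [hZident]
        rw [hPprod]
        exact mul_le_of_le_one_right (hK0 i) (pow_le_one₀ hZ0nonneg hZ0le)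
    linarith [step1, step2, step3]
  -- part 2 first
  have part2 : ∀ n : ℕ, 1 ≤ n → elg X n (Pi.single j 1) = ∫ ω, Real.log (1 + X 0 ω j) := by
    intro n hn
    have hn' : (n : ℝ) ≠ 0 := Nat.cast_ne_zero.mpr (by omega)
    have : (fun ω => Real.log (∑ i, (Pi.single j 1 : Fin m → ℝ) i * compoundReturn X n ω i))
        = fun ω => Real.log (compoundReturn X n ω j) := by
      funext ω; rw [hej n ω]
    rw [elg, this, B n, ← mul_assoc, inv_mul_cancel₀ hn', one_mul]
  have part1 : ∀ n : ℕ, 1 ≤ n → ∀ K ∈ simplex m, elg X n K ≤ elg X n (Pi.single j 1) := by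
    intro n hn K hK
    have hrwej : (fun ω => Real.log (∑ i, (Pi.single j 1 : Fin m → ℝ) i * compoundReturn X n ω i))
        = fun ω => Real.log (compoundReturn X n ω j) := by
      funext ω; rw [hej n ω]
    rw [elg, elg, hrwej]
    exact mul_le_mul_of_nonneg_left (core n K hK) (by positivity)
  refine ⟨part1, part2, fun n hn => ?_⟩
  have hmem : (Pi.single j 1 : Fin m → ℝ) ∈ simplex m := by
    constructor
    · intro i
      by_cases h : i = j
      · subst h; rw [Pi.single_eq_same]; exact zero_le_one
      · exact le_of_eq (Pi.single_eq_of_ne (M := fun _ => ℝ) h 1).symm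
    · rw [Finset.sum_eq_single j (fun i _ hij => Pi.single_eq_of_ne (M := fun _ => ℝ) hij 1)
        (fun h => absurd (Finset.mem_univ j) h)]
      simp
  refine IsGreatest.csSup_eq ⟨⟨Pi.single j 1, hmem, part2 n hn⟩, ?_⟩
  rintro x ⟨K, hK, rfl⟩
  exact (part1 n hn K hK).trans_eq (part2 n hn)
end

section
/- If the all-in weight e_j (the j-th standard basis vector of ℝ^m) is log-optimal for the single-period problem, i.e. g_1(K) ≤ g_1(e_j) for every K ∈ 𝒦, then asset j is dominant: E[(1 + X_i(0))/(1 + X_j(0))] ≤ 1 for every i ≠ j. -/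
open MeasureTheory ProbabilityTheory Filter Finset Real

private lemma log_one_add_ge' {u : ℝ} (h1 : -(1/2) ≤ u) : u - 2*u^2 ≤ Real.log (1+u) := by
  have hpos : (0:ℝ) < 1 + u := by linarith
  have h2 : Real.log ((1+u)⁻¹) ≤ (1+u)⁻¹ - 1 := Real.log_le_sub_one_of_pos (by positivity)
  rw [Real.log_inv] at h2
  have h3 : u / (1+u) ≤ Real.log (1+u) := by
    have : (1:ℝ) - (1+u)⁻¹ ≤ Real.log (1+u) := by linarith
    calc u / (1+u) = 1 - (1+u)⁻¹ := by field_simp; ring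
    _ ≤ _ := this
  refine le_trans ?_ h3
  rw [le_div_iff₀ hpos]
  nlinarith

private lemma sum_single_mul' {m : ℕ} (t : Fin m) (c : ℝ) (g : Fin m → ℝ) :
    ∑ s, (Pi.single t c : Fin m → ℝ) s * g s = c * g t := by
  simp [Pi.single_apply, Finset.sum_ite_eq', ite_mul]

private lemma sum_single' {m : ℕ} (t : Fin m) (c : ℝ) :
    ∑ s, (Pi.single t c : Fin m → ℝ) s = c := by
  simp [Pi.single_apply, Finset.sum_ite_eq']

private lemma integrable_of_bdd {Ω : Type*} [MeasureSpace Ω]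
    [IsProbabilityMeasure (ℙ : Measure Ω)] {g : Ω → ℝ} (hg : Measurable g) {D : ℝ}
    (hD : ∀ᵐ ω ∂(ℙ : Measure Ω), |g ω| ≤ D) : Integrable g := by
  refine Integrable.mono' (integrable_const D) hg.aestronglyMeasurable ?_
  filter_upwards [hD] with ω h
  simpa [Real.norm_eq_abs] using h

set_option maxHeartbeats 1000000 in
/-- **Dominant Asset Theorem (necessity).** If the all-in weight `e_j` is log-optimal for the
single-period problem, then asset `j` is dominant. -/
theorem log_optimal_imp_dominant
    {Ω : Type*} [MeasureSpace Ω] [IsProbabilityMeasure (ℙ : Measure Ω)]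
    {m : ℕ} (hm : 2 ≤ m)
    (X : ℕ → Ω → Fin m → ℝ)
    (hmeas : ∀ k, Measurable (X k))
    (hiid : iIndepFun X ℙ)
    (hident : ∀ k, IdentDistrib (X k) (X 0) ℙ ℙ)
    (Xmin Xmax : Fin m → ℝ)
    (hXmin : ∀ i, -1 < Xmin i)
    (hbdd : ∀ k, ∀ᵐ ω ∂(ℙ : Measure Ω), ∀ i, Xmin i ≤ X k ω i ∧ X k ω i ≤ Xmax i)
    (j : Fin m)
    (hopt : ∀ K ∈ simplex m, elg X 1 K ≤ elg X 1 (Pi.single j 1)) :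
    ∀ i, i ≠ j → ∫ ω, (1 + X 0 ω i) / (1 + X 0 ω j) ≤ 1 := by
  intro i hij
  have hae := hbdd 0
  -- elg simplification
  have helg : ∀ K : Fin m → ℝ,
      elg X 1 K = ∫ ω, Real.log (∑ t, K t * (1 + X 0 ω t)) := by
    intro K; simp [elg, compoundReturn]
  -- positivity of bounds
  set c : Fin m → ℝ := fun t => 1 + Xmin t with hc_def
  set C : Fin m → ℝ := fun t => 1 + Xmax t with hC_def
  have hc : ∀ t, 0 < c t := fun t => by have := hXmin t; simp [hc_def]; linarith
  obtain ⟨ω0, hω0⟩ := hae.exists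
  have hcC : ∀ t, c t ≤ C t := fun t => by
    have := hω0 t; simp [hc_def, hC_def]; linarith [this.1, this.2]
  have hCpos : ∀ t, 0 < C t := fun t => lt_of_lt_of_le (hc t) (hcC t)
  set B : ℝ := C i / c j + 1 with hB_def
  have hB1 : 1 ≤ B := by
    have : 0 < C i / c j := div_pos (hCpos i) (hc j)
    simp [hB_def]; linarith
  have hBpos : 0 < B := lt_of_lt_of_le one_pos hB1
  set f : Ω → ℝ := fun ω => (1 + X 0 ω i) / (1 + X 0 ω j) with hf_def
  -- a.e. bounds
  have haeB : ∀ᵐ ω ∂(ℙ : Measure Ω),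
      c j ≤ 1 + X 0 ω j ∧ 1 + X 0 ω j ≤ C j ∧ c i ≤ 1 + X 0 ω i ∧ 1 + X 0 ω i ≤ C i
      ∧ |f ω - 1| ≤ B := by
    filter_upwards [hae] with ω h
    have hj := h j; have hi := h i
    have h1 : c j ≤ 1 + X 0 ω j := by simp [hc_def]; linarith [hj.1]
    have h2 : 1 + X 0 ω j ≤ C j := by simp [hC_def]; linarith [hj.2]
    have h3 : c i ≤ 1 + X 0 ω i := by simp [hc_def]; linarith [hi.1]
    have h4 : 1 + X 0 ω i ≤ C i := by simp [hC_def]; linarith [hi.2]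
    refine ⟨h1, h2, h3, h4, ?_⟩
    have hjpos : 0 < 1 + X 0 ω j := lt_of_lt_of_le (hc j) h1
    have hipos : 0 < 1 + X 0 ω i := lt_of_lt_of_le (hc i) h3
    have hfub : f ω ≤ C i / c j := by
      apply div_le_div₀ (le_of_lt (hCpos i)) h4 (hc j) h1
    have hflb : 0 ≤ f ω := le_of_lt (div_pos hipos hjpos)
    rw [abs_le]
    constructor <;> [skip; skip] <;> simp [hB_def] at * <;> linarith
  -- measurability
  have hXm : ∀ t, Measurable (fun ω => X 0 ω t) :=
    fun t => (measurable_pi_apply t).comp (hmeas 0)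
  have hf_meas : Measurable f :=
    (measurable_const.add (hXm i)).div (measurable_const.add (hXm j))
  -- integrability
  have int_f : Integrable f := by
    refine integrable_of_bdd hf_meas (D := B + 1) ?_
    filter_upwards [haeB] with ω h
    have := h.2.2.2.2
    calc |f ω| = |f ω - 1 + 1| := by ring_nf
    _ ≤ |f ω - 1| + 1 := by exact (abs_add_le _ _).trans (by simp)
    _ ≤ B + 1 := by linarith
  have int_sq : Integrable (fun ω => (f ω - 1)^2) := by
    refine integrable_of_bdd (by fun_prop) (D := B^2) ?_
    filter_upwards [haeB] with ω h
    have := h.2.2.2.2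
    rw [abs_le] at this
    rw [abs_le]
    constructor <;> nlinarith
  set Dj : ℝ := max |Real.log (c j)| |Real.log (C j)| with hDj_def
  have log_abs_bdd : ∀ x : ℝ, c j ≤ x → x ≤ C j → |Real.log x| ≤ Dj := by
    intro x h1 h2
    have hxpos : 0 < x := lt_of_lt_of_le (hc j) h1
    rw [abs_le]
    constructor
    · have : Real.log (c j) ≤ Real.log x := Real.log_le_log (hc j) h1
      have h3 : -|Real.log (c j)| ≤ Real.log (c j) := neg_abs_le _
      have : -Dj ≤ -|Real.log (c j)| := by simp [hDj_def]
      linarith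
    · have : Real.log x ≤ Real.log (C j) := Real.log_le_log hxpos h2
      have h3 : Real.log (C j) ≤ |Real.log (C j)| := le_abs_self _
      have : |Real.log (C j)| ≤ Dj := le_max_right _ _
      linarith
  have int_logj : Integrable (fun ω => Real.log (1 + X 0 ω j)) := by
    refine integrable_of_bdd
      (Real.measurable_log.comp (measurable_const.add (hXm j))) (D := Dj) ?_
    filter_upwards [haeB] with ω h
    exact log_abs_bdd _ h.1 h.2.1
  -- key inequality for small λ
  have hkey : ∀ lam : ℝ, 0 < lam → lam ≤ 1/(2*B) → lam * ((∫ ω, f ω) - 1) ≤ 2*lam^2*B^2 := by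
    intro lam hlam0 hlamB
    have hlam1 : lam ≤ 1 := by
      have : 1/(2*B) ≤ 1/2 := by
        apply div_le_div_of_nonneg_left <;> linarith
      linarith
    set K : Fin m → ℝ := fun t =>
      (Pi.single j (1-lam) : Fin m → ℝ) t + (Pi.single i lam : Fin m → ℝ) t with hK_def
    have hK : K ∈ simplex m := by
      constructor
      · intro t
        refine add_nonneg ?_ ?_ <;> rw [Pi.single_apply] <;> split <;> linarith
      · rw [Finset.sum_add_distrib, sum_single', sum_single']; ring
    have hKsum : ∀ ω, ∑ t, K t * (1 + X 0 ω t)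
        = (1-lam) * (1 + X 0 ω j) + lam * (1 + X 0 ω i) := by
      intro ω
      simp only [hK_def, add_mul, Finset.sum_add_distrib, sum_single_mul']
    have hopt' := hopt K hK
    rw [helg, helg] at hopt'
    simp only [hKsum, sum_single_mul', one_mul] at hopt'
    -- pointwise inequality
    have hpt : ∀ᵐ ω ∂(ℙ : Measure Ω),
        Real.log (1 + X 0 ω j) + lam * (f ω - 1) - 2*lam^2*(f ω - 1)^2
          ≤ Real.log ((1-lam) * (1 + X 0 ω j) + lam * (1 + X 0 ω i)) := by
      filter_upwards [haeB] with ω h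
      obtain ⟨h1, h2, h3, h4, h5⟩ := h
      have hjpos : 0 < 1 + X 0 ω j := lt_of_lt_of_le (hc j) h1
      set u : ℝ := lam * (f ω - 1) with hu_def
      have huabs : |u| ≤ 1/2 := by
        rw [hu_def, abs_mul, abs_of_pos hlam0]
        calc lam * |f ω - 1| ≤ (1/(2*B)) * B := by
              apply mul_le_mul hlamB h5 (abs_nonneg _) (by positivity)
        _ = 1/2 := by field_simp
      have hu1 : -(1/2) ≤ u := by have := abs_le.mp huabs; linarith [this.1]
      have hu2 : u ≤ 1/2 := (abs_le.mp huabs).2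
      have heq : (1-lam) * (1 + X 0 ω j) + lam * (1 + X 0 ω i)
          = (1 + X 0 ω j) * (1 + u) := by
        rw [hu_def, hf_def]
        field_simp
        ring
      rw [heq, Real.log_mul (ne_of_gt hjpos) (by linarith)]
      have := log_one_add_ge' hu1
      have : u - 2*u^2 ≤ Real.log (1+u) := this
      have hexp : lam * (f ω - 1) - 2*lam^2*(f ω - 1)^2 = u - 2*u^2 := by
        rw [hu_def]; ring
      linarith
    -- integrability of LHS of hopt'
    have int_logK : Integrable (fun ω =>
        Real.log ((1-lam) * (1 + X 0 ω j) + lam * (1 + X 0 ω i))) := by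
      set m' : ℝ := min (c j) (c i) with hm'_def
      set M' : ℝ := max (C j) (C i) with hM'_def
      refine integrable_of_bdd
        (Real.measurable_log.comp
          (((measurable_const.add (hXm j)).const_mul (1-lam)).add
            ((measurable_const.add (hXm i)).const_mul lam)))
        (D := max |Real.log m'| |Real.log M'|) ?_
      filter_upwards [haeB] with ω h
      obtain ⟨h1, h2, h3, h4, _⟩ := h
      have hm'pos : 0 < m' := lt_min (hc j) (hc i)
      have hlo : m' ≤ (1-lam) * (1 + X 0 ω j) + lam * (1 + X 0 ω i) := by
        have e1 : m' ≤ 1 + X 0 ω j := le_trans (min_le_left _ _) h1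
        have e2 : m' ≤ 1 + X 0 ω i := le_trans (min_le_right _ _) h3
        nlinarith
      have hhi : (1-lam) * (1 + X 0 ω j) + lam * (1 + X 0 ω i) ≤ M' := by
        have e1 : 1 + X 0 ω j ≤ M' := le_trans h2 (le_max_left _ _)
        have e2 : 1 + X 0 ω i ≤ M' := le_trans h4 (le_max_right _ _)
        nlinarith
      have hxpos : 0 < (1-lam) * (1 + X 0 ω j) + lam * (1 + X 0 ω i) :=
        lt_of_lt_of_le hm'pos hlo
      rw [abs_le]
      constructor
      · have := Real.log_le_log hm'pos hlo
        have h3' : -|Real.log m'| ≤ Real.log m' := neg_abs_le _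
        have h4' : |Real.log m'| ≤ max |Real.log m'| |Real.log M'| := le_max_left _ _
        linarith
      · have := Real.log_le_log hxpos hhi
        have h3' : Real.log M' ≤ |Real.log M'| := le_abs_self _
        have h4' : |Real.log M'| ≤ max |Real.log m'| |Real.log M'| := le_max_right _ _
        linarith
    -- integrate pointwise inequality
    have int_rhs : Integrable (fun ω =>
        Real.log (1 + X 0 ω j) + lam * (f ω - 1) - 2*lam^2*(f ω - 1)^2) := by
      exact ((int_logj.add (((int_f.sub (integrable_const 1)).const_mul lam))).sub
        (int_sq.const_mul (2*lam^2)))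
    have hmono := integral_mono_ae int_rhs int_logK hpt
    have hI2 : Integrable (fun ω => 2*lam^2*(f ω - 1)^2) := int_sq.const_mul (2*lam^2)
    have hI3 : Integrable (fun ω => lam * (f ω - 1)) :=
      (int_f.sub (integrable_const 1)).const_mul lam
    have hI1 : Integrable (fun ω => Real.log (1 + X 0 ω j) + lam * (f ω - 1)) :=
      int_logj.add hI3
    have e1 : (∫ ω, (Real.log (1 + X 0 ω j) + lam * (f ω - 1) - 2*lam^2*(f ω - 1)^2))
        = (∫ ω, (Real.log (1 + X 0 ω j) + lam * (f ω - 1))) - ∫ ω, 2*lam^2*(f ω - 1)^2 :=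
      integral_sub hI1 hI2
    have e2 : (∫ ω, (Real.log (1 + X 0 ω j) + lam * (f ω - 1)))
        = (∫ ω, Real.log (1 + X 0 ω j)) + ∫ ω, lam * (f ω - 1) := integral_add int_logj hI3
    have e3 : (∫ ω, lam * (f ω - 1)) = lam * ∫ ω, (f ω - 1) := integral_const_mul _ _
    have e4 : (∫ ω, 2*lam^2*(f ω - 1)^2) = 2*lam^2 * ∫ ω, (f ω - 1)^2 := integral_const_mul _ _
    have e5 : (∫ ω, (f ω - 1)) = (∫ ω, f ω) - 1 := by
      rw [integral_sub int_f (integrable_const 1)]; simp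
    have hsplit : ∫ ω, (Real.log (1 + X 0 ω j) + lam * (f ω - 1) - 2*lam^2*(f ω - 1)^2)
        = (∫ ω, Real.log (1 + X 0 ω j)) + lam * ((∫ ω, f ω) - 1)
          - 2*lam^2 * ∫ ω, (f ω - 1)^2 := by
      rw [e1, e2, e3, e4, e5]
    have hsqB : ∫ ω, (f ω - 1)^2 ≤ B^2 := by
      have : ∫ ω, (f ω - 1)^2 ≤ ∫ _ω, B^2 ∂(ℙ : Measure Ω) := by
        refine integral_mono_ae int_sq (integrable_const _) ?_
        filter_upwards [haeB] with ω h
        have := abs_le.mp h.2.2.2.2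
        nlinarith [this.1, this.2]
      simpa using this
    rw [hsplit] at hmono
    have h6 : 2*lam^2 * (∫ ω, (f ω - 1)^2) ≤ 2*lam^2 * B^2 :=
      mul_le_mul_of_nonneg_left hsqB (by positivity)
    linarith [hmono, hopt', h6]
  -- conclude
  by_contra hcon
  push_neg at hcon
  have hε : 0 < (∫ ω, f ω) - 1 := by linarith
  set ε : ℝ := (∫ ω, f ω) - 1 with hε_def
  set lam : ℝ := min (1/(2*B)) (ε/(4*B^2)) with hlam_def
  have hlam0 : 0 < lam := lt_min (by positivity) (by positivity)
  have hlamB : lam ≤ 1/(2*B) := min_le_left _ _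
  have hlamε : lam ≤ ε/(4*B^2) := min_le_right _ _
  have hεint : lam * ε ≤ 2*lam^2*B^2 := hkey lam hlam0 hlamB
  have h4 : lam*(4*B^2) ≤ ε := (le_div_iff₀ (by positivity)).mp hlamε
  nlinarith [hεint, h4, hlam0, hε]
end

section
/- Suppose asset j is dominant and let K ∈ 𝒦 with K_j > 0. Then for every n ≥ 1, the optimality gap satisfies the upper bound g_1* − g_n(K) ≤ (1/n)·log(1/K_j), where g_1* = E[log(1 + X_j(0))]. -/
open MeasureTheory ProbabilityTheory Filter Finset Real

/-- Upper bound on the optimality gap of buy and hold with a dominant asset: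
`g_1^* - g_n(K) ≤ (1/n) log(1/K_j)`. -/
theorem buy_and_hold_gap_upper_bound
    {Ω : Type*} [MeasureSpace Ω] [IsProbabilityMeasure (ℙ : Measure Ω)]
    {m : ℕ} (hm : 2 ≤ m)
    (X : ℕ → Ω → Fin m → ℝ)
    (hmeas : ∀ k, Measurable (X k))
    (hiid : iIndepFun X ℙ)
    (hident : ∀ k, IdentDistrib (X k) (X 0) ℙ ℙ)
    (Xmin Xmax : Fin m → ℝ)
    (hXmin : ∀ i, -1 < Xmin i)
    (hbdd : ∀ k, ∀ᵐ ω ∂(ℙ : Measure Ω), ∀ i, Xmin i ≤ X k ω i ∧ X k ω i ≤ Xmax i)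
    (j : Fin m)
    (hdom : ∀ i, i ≠ j → ∫ ω, (1 + X 0 ω i) / (1 + X 0 ω j) ≤ 1)
    (K : Fin m → ℝ) (hK : K ∈ simplex m) (hKj : 0 < K j) :
    ∀ n : ℕ, 1 ≤ n →
      (∫ ω, Real.log (1 + X 0 ω j)) - elg X n K ≤ (n : ℝ)⁻¹ * Real.log (1 / K j) := by
  intro n hn
  obtain ⟨hK0, hKsum⟩ := hK
  have hnpos : (0:ℝ) < n := by exact_mod_cast hn
  have hXm : ∀ k i, Measurable fun ω => X k ω i := fun k i =>
    (measurable_pi_apply i).comp (hmeas k)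
  set c : ℕ → Ω → ℝ := fun k ω => Real.log (1 + X k ω j) with hc
  have hcm : ∀ k, Measurable (c k) := fun k =>
    Real.measurable_log.comp (measurable_const.add (hXm k j))
  have hminpos : ∀ i, (0:ℝ) < 1 + Xmin i := fun i => by linarith [hXmin i]
  -- integrability of c k
  have hcint : ∀ k, Integrable (c k) := by
    intro k
    refine Integrable.mono'
      (integrable_const (max |Real.log (1 + Xmin j)| |Real.log (1 + Xmax j)|))
      (hcm k).aestronglyMeasurable ?_
    filter_upwards [hbdd k] with ω hω
    obtain ⟨h1, h2⟩ := hω j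
    have hpos : 0 < 1 + X k ω j := lt_of_lt_of_le (hminpos j) (by linarith)
    have hlb : Real.log (1 + Xmin j) ≤ c k ω := Real.log_le_log (hminpos j) (by linarith)
    have hub : c k ω ≤ Real.log (1 + Xmax j) := Real.log_le_log hpos (by linarith)
    rw [Real.norm_eq_abs, abs_le]
    constructor
    · have := neg_abs_le (Real.log (1 + Xmin j))
      have := le_max_left |Real.log (1 + Xmin j)| |Real.log (1 + Xmax j)|
      linarith
    · have := le_abs_self (Real.log (1 + Xmax j))
      have := le_max_right |Real.log (1 + Xmin j)| |Real.log (1 + Xmax j)|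
      linarith
  have hAE : ∀ᵐ ω ∂(ℙ : Measure Ω), ∀ k, ∀ i, Xmin i ≤ X k ω i ∧ X k ω i ≤ Xmax i :=
    ae_all_iff.2 hbdd
  set S : Ω → ℝ := fun ω => ∑ i, K i * compoundReturn X n ω i with hS
  have hSm : Measurable S := by
    apply Finset.measurable_sum
    intro i _
    exact measurable_const.mul
      (Finset.measurable_prod _ fun k _ => measurable_const.add (hXm k i))
  -- pointwise facts
  have hpoint : ∀ ω, (∀ k, ∀ i, Xmin i ≤ X k ω i ∧ X k ω i ≤ Xmax i) →
      (0 < S ω ∧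
       Real.log (K j) + ∑ k ∈ Finset.range n, c k ω ≤ Real.log (S ω) ∧
       Real.log (S ω) ≤ Real.log (∑ i, K i * (1 + Xmax i) ^ n) ∧
       Real.log (K j) + (n : ℝ) * Real.log (1 + Xmin j) ≤ Real.log (S ω)) := by
    intro ω hω
    have hfac : ∀ k i, 0 < 1 + X k ω i := fun k i =>
      lt_of_lt_of_le (hminpos i) (by linarith [(hω k i).1])
    have hRpos : ∀ i, 0 < compoundReturn X n ω i := fun i =>
      Finset.prod_pos fun k _ => hfac k i
    have hSlb : K j * compoundReturn X n ω j ≤ S ω :=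
      Finset.single_le_sum (f := fun i => K i * compoundReturn X n ω i)
        (fun i _ => mul_nonneg (hK0 i) (hRpos i).le) (Finset.mem_univ j)
    have hSpos : 0 < S ω := lt_of_lt_of_le (mul_pos hKj (hRpos j)) hSlb
    have hlog1 : Real.log (K j * compoundReturn X n ω j) ≤ Real.log (S ω) :=
      Real.log_le_log (mul_pos hKj (hRpos j)) hSlb
    rw [Real.log_mul (ne_of_gt hKj) (ne_of_gt (hRpos j))] at hlog1
    have hlogprod : Real.log (compoundReturn X n ω j) = ∑ k ∈ Finset.range n, c k ω := by
      rw [compoundReturn, Real.log_prod]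
      intro k _
      exact ne_of_gt (hfac k j)
    rw [hlogprod] at hlog1
    refine ⟨hSpos, hlog1, ?_, ?_⟩
    · apply Real.log_le_log hSpos
      apply Finset.sum_le_sum
      intro i _
      apply mul_le_mul_of_nonneg_left _ (hK0 i)
      calc compoundReturn X n ω i ≤ ∏ k ∈ Finset.range n, (1 + Xmax i) := by
            apply Finset.prod_le_prod
            · intro k _; exact (hfac k i).le
            · intro k _; linarith [(hω k i).2]
        _ = (1 + Xmax i) ^ n := by rw [Finset.prod_const, Finset.card_range]
    · refine le_trans ?_ hlog1
      have : (n : ℝ) * Real.log (1 + Xmin j) ≤ ∑ k ∈ Finset.range n, c k ω := by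
        calc (n : ℝ) * Real.log (1 + Xmin j)
            = ∑ _k ∈ Finset.range n, Real.log (1 + Xmin j) := by
              rw [Finset.sum_const, Finset.card_range, nsmul_eq_mul]
          _ ≤ ∑ k ∈ Finset.range n, c k ω := by
              apply Finset.sum_le_sum
              intro k _
              exact Real.log_le_log (hminpos j) (by linarith [(hω k j).1])
      linarith
  -- integrability of log S
  have hLint : Integrable (fun ω => Real.log (S ω)) := by
    refine Integrable.mono'
      (integrable_const (max |Real.log (K j) + (n : ℝ) * Real.log (1 + Xmin j)|
        |Real.log (∑ i, K i * (1 + Xmax i) ^ n)|))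
      (Real.measurable_log.comp hSm).aestronglyMeasurable ?_
    filter_upwards [hAE] with ω hω
    obtain ⟨-, -, hub, hlb⟩ := hpoint ω hω
    rw [Real.norm_eq_abs, abs_le]
    constructor
    · have := neg_abs_le (Real.log (K j) + (n : ℝ) * Real.log (1 + Xmin j))
      have := le_max_left |Real.log (K j) + (n : ℝ) * Real.log (1 + Xmin j)|
        |Real.log (∑ i, K i * (1 + Xmax i) ^ n)|
      linarith
    · have := le_abs_self (Real.log (∑ i, K i * (1 + Xmax i) ^ n))
      have := le_max_right |Real.log (K j) + (n : ℝ) * Real.log (1 + Xmin j)|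
        |Real.log (∑ i, K i * (1 + Xmax i) ^ n)|
      linarith
  -- lower bound on the integral
  have hlow_int : Integrable (fun ω => Real.log (K j) + ∑ k ∈ Finset.range n, c k ω) :=
    (integrable_const _).add (integrable_finset_sum _ fun k _ => hcint k)
  have hmono : ∫ ω, (Real.log (K j) + ∑ k ∈ Finset.range n, c k ω)
      ≤ ∫ ω, Real.log (S ω) := by
    apply integral_mono_ae hlow_int hLint
    filter_upwards [hAE] with ω hω
    exact (hpoint ω hω).2.1
  -- identical distributions: ∫ c k = ∫ c 0
  have hF : Measurable fun v : Fin m → ℝ => Real.log (1 + v j) :=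
    Real.measurable_log.comp (measurable_const.add (measurable_pi_apply j))
  have hceq : ∀ k, ∫ ω, c k ω = ∫ ω, c 0 ω := fun k => ((hident k).comp hF).integral_eq
  have hcalc : ∫ ω, (Real.log (K j) + ∑ k ∈ Finset.range n, c k ω)
      = Real.log (K j) + (n : ℝ) * ∫ ω, c 0 ω := by
    rw [integral_add (integrable_const _) (integrable_finset_sum _ fun k _ => hcint k),
      integral_const, integral_finset_sum _ fun k _ => hcint k]
    simp only [measure_univ, ENNReal.toReal_one, probReal_univ, smul_eq_mul, one_mul]
    congr 1
    rw [Finset.sum_congr rfl fun k _ => hceq k, Finset.sum_const, Finset.card_range,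
      nsmul_eq_mul]
  rw [hcalc] at hmono
  -- finish the arithmetic
  have hElg : elg X n K = (n : ℝ)⁻¹ * ∫ ω, Real.log (S ω) := rfl
  rw [hElg, one_div, Real.log_inv]
  have h1 := mul_le_mul_of_nonneg_left hmono (inv_nonneg.mpr hnpos.le)
  have h3 : (n : ℝ)⁻¹ * ((n : ℝ) * ∫ ω, c 0 ω) = ∫ ω, c 0 ω := by
    rw [← mul_assoc, inv_mul_cancel₀ hnpos.ne', one_mul]
  rw [mul_add, h3] at h1
  have hI : (∫ ω, Real.log (1 + X 0 ω j)) = ∫ ω, c 0 ω := rfl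
  rw [hI, mul_neg]
  linarith
end

section
/- Suppose asset j is dominant and let K ∈ 𝒦 with K_j > 0. Then for every n ≥ 1, the optimality gap satisfies the lower bound g_1* − g_n(K) ≥ (1/n)·(log(1/K_j) + 1 − 1/K_j), where g_1* = E[log(1 + X_j(0))]. -/
open MeasureTheory ProbabilityTheory Filter Finset Real

lemma integral_prod_range_aux {Ω : Type*} [MeasureSpace Ω]
    [IsProbabilityMeasure (ℙ : Measure Ω)]
    (Y : ℕ → Ω → ℝ) (hY : ∀ k, Measurable (Y k))
    (hind : iIndepFun Y ℙ) (n : ℕ) :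
    ∫ ω, ∏ k ∈ Finset.range n, Y k ω = ∏ k ∈ Finset.range n, ∫ ω, Y k ω := by
  induction n with
  | zero => simp
  | succ n ih =>
    have hpm : Measurable (∏ j ∈ Finset.range n, Y j) := by
      rw [show (∏ j ∈ Finset.range n, Y j) = fun ω => ∏ j ∈ Finset.range n, Y j ω from
        funext fun ω => Finset.prod_apply ω _ _]
      exact Finset.measurable_prod _ (fun k _ => hY k)
    have h := (hind.indepFun_prod_range_succ hY n).integral_mul_eq_mul_integral
      hpm.aestronglyMeasurable (hY n).aestronglyMeasurable
    simp only [Finset.prod_apply, Pi.mul_apply] at h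
    have h2 : integral ℙ (∏ j ∈ Finset.range n, Y j) = ∫ ω, ∏ j ∈ Finset.range n, Y j ω := by
      congr 1; exact funext fun ω => Finset.prod_apply ω _ _
    rw [ih] at h
    simp only [Finset.prod_range_succ]
    rw [← h]

/-- Lower bound on the optimality gap of buy and hold with a dominant asset:
`g_1^* - g_n(K) ≥ (1/n) (log(1/K_j) + 1 - 1/K_j)`. -/
theorem buy_and_hold_gap_lower_bound
    {Ω : Type*} [MeasureSpace Ω] [IsProbabilityMeasure (ℙ : Measure Ω)]
    {m : ℕ} (hm : 2 ≤ m)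
    (X : ℕ → Ω → Fin m → ℝ)
    (hmeas : ∀ k, Measurable (X k))
    (hiid : iIndepFun X ℙ)
    (hident : ∀ k, IdentDistrib (X k) (X 0) ℙ ℙ)
    (Xmin Xmax : Fin m → ℝ)
    (hXmin : ∀ i, -1 < Xmin i)
    (hbdd : ∀ k, ∀ᵐ ω ∂(ℙ : Measure Ω), ∀ i, Xmin i ≤ X k ω i ∧ X k ω i ≤ Xmax i)
    (j : Fin m)
    (hdom : ∀ i, i ≠ j → ∫ ω, (1 + X 0 ω i) / (1 + X 0 ω j) ≤ 1)
    (K : Fin m → ℝ) (hK : K ∈ simplex m) (hKj : 0 < K j) :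
    ∀ n : ℕ, 1 ≤ n →
      (n : ℝ)⁻¹ * (Real.log (1 / K j) + 1 - 1 / K j) ≤
        (∫ ω, Real.log (1 + X 0 ω j)) - elg X n K := by
  intro n hn
  obtain ⟨hK0, hK1⟩ := hK
  have hc : ∀ i, (0:ℝ) < 1 + Xmin i := fun i => by linarith [hXmin i]
  -- a.e. bound for all k simultaneously
  have hae : ∀ᵐ ω ∂(ℙ : Measure Ω), ∀ k, ∀ i, Xmin i ≤ X k ω i ∧ X k ω i ≤ Xmax i :=
    (ae_all_iff).2 hbdd
  have hne : (MeasureTheory.ae (ℙ : Measure Ω)).NeBot :=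
    ae_neBot.2 (IsProbabilityMeasure.ne_zero ℙ)
  obtain ⟨ω₀, hω₀⟩ := hae.exists
  have hminmax : ∀ i, Xmin i ≤ Xmax i := fun i => le_trans (hω₀ 0 i).1 (hω₀ 0 i).2
  have hC : ∀ i, (0:ℝ) < 1 + Xmax i := fun i => lt_of_lt_of_le (hc i) (by linarith [hminmax i])
  -- measurability
  have hXm : ∀ k i, Measurable (fun ω => X k ω i) :=
    fun k i => (measurable_pi_apply i).comp (hmeas k)
  have hRm : ∀ i, Measurable (fun ω => compoundReturn X n ω i) := by
    intro i
    exact Finset.measurable_prod _ (fun k _ => measurable_const.add (hXm k i))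
  set S : Ω → ℝ := fun ω => ∑ i, K i * compoundReturn X n ω i with hS
  have hSm : Measurable S :=
    Finset.measurable_sum _ (fun i _ => measurable_const.mul (hRm i))
  set W : Fin m → Ω → ℝ :=
    fun i ω => ∏ k ∈ Finset.range n, (1 + X k ω i) / (1 + X k ω j) with hW
  have hWm : ∀ i, Measurable (W i) := fun i =>
    Finset.measurable_prod _ (fun k _ =>
      (measurable_const.add (hXm k i)).div (measurable_const.add (hXm k j)))
  -- a.e. bounds on compound returns
  have haeR : ∀ᵐ ω ∂(ℙ : Measure Ω), ∀ i,
      (1 + Xmin i)^n ≤ compoundReturn X n ω i ∧ compoundReturn X n ω i ≤ (1 + Xmax i)^n := by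
    filter_upwards [hae] with ω hω i
    constructor
    · calc (1 + Xmin i)^n = ∏ k ∈ Finset.range n, (1 + Xmin i) := by
            simp [Finset.prod_const]
        _ ≤ ∏ k ∈ Finset.range n, (1 + X k ω i) :=
            Finset.prod_le_prod (fun k _ => (hc i).le) (fun k _ => by linarith [(hω k i).1])
        _ = compoundReturn X n ω i := rfl
    · calc compoundReturn X n ω i = ∏ k ∈ Finset.range n, (1 + X k ω i) := rfl
        _ ≤ ∏ k ∈ Finset.range n, (1 + Xmax i) :=
            Finset.prod_le_prod (fun k _ => by linarith [(hω k i).1, hc i])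
              (fun k _ => by linarith [(hω k i).2])
        _ = (1 + Xmax i)^n := by simp [Finset.prod_const]
  have haeRpos : ∀ᵐ ω ∂(ℙ : Measure Ω), ∀ i, 0 < compoundReturn X n ω i := by
    filter_upwards [haeR] with ω hω i
    exact lt_of_lt_of_le (pow_pos (hc i) n) (hω i).1
  -- a.e. bounds on W
  have haeW : ∀ᵐ ω ∂(ℙ : Measure Ω), ∀ i,
      0 ≤ W i ω ∧ W i ω ≤ ((1 + Xmax i)/(1 + Xmin j))^n := by
    filter_upwards [hae] with ω hω i
    have hfac : ∀ k, (0:ℝ) ≤ (1 + X k ω i) / (1 + X k ω j) := fun k =>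
      div_nonneg (by linarith [(hω k i).1, hc i]) (by linarith [(hω k j).1, hc j])
    constructor
    · exact Finset.prod_nonneg (fun k _ => hfac k)
    · calc W i ω ≤ ∏ k ∈ Finset.range n, ((1 + Xmax i)/(1 + Xmin j)) := by
            refine Finset.prod_le_prod (fun k _ => hfac k) (fun k _ => ?_)
            apply div_le_div₀ (hC i).le (by linarith [(hω k i).2])
              (hc j) (by linarith [(hω k j).1])
        _ = ((1 + Xmax i)/(1 + Xmin j))^n := by simp [Finset.prod_const, div_pow]
  -- integrability from a.e. boundedness (generic helper)
  have hbddInt : ∀ (f : Ω → ℝ) (C : ℝ), Measurable f →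
      (∀ᵐ ω ∂(ℙ : Measure Ω), ‖f ω‖ ≤ C) → Integrable f ℙ := by
    intro f C hf hb
    exact Integrable.mono' (integrable_const C) hf.aestronglyMeasurable hb
  -- integrable: W i
  have hWint : ∀ i, Integrable (W i) ℙ := by
    intro i
    refine hbddInt (W i) (((1 + Xmax i)/(1 + Xmin j))^n) (hWm i) ?_
    filter_upwards [haeW] with ω hω
    rw [Real.norm_eq_abs, abs_le]
    refine ⟨le_trans ?_ (hω i).1, (hω i).2⟩
    have : (0:ℝ) ≤ ((1 + Xmax i)/(1 + Xmin j))^n :=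
      pow_nonneg (div_nonneg (hC i).le (hc j).le) n
    linarith
  -- integrable: log (1 + X k ω j)
  have hlogint : ∀ k, Integrable (fun ω => Real.log (1 + X k ω j)) ℙ := by
    intro k
    refine hbddInt _ (max |Real.log (1 + Xmin j)| |Real.log (1 + Xmax j)|)
      (Real.measurable_log.comp (measurable_const.add (hXm k j))) ?_
    filter_upwards [hae] with ω hω
    rw [Real.norm_eq_abs, abs_le]
    have h1 : Real.log (1 + Xmin j) ≤ Real.log (1 + X k ω j) :=
      Real.log_le_log (hc j) (by linarith [(hω k j).1])
    have h2 : Real.log (1 + X k ω j) ≤ Real.log (1 + Xmax j) :=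
      Real.log_le_log (by linarith [(hω k j).1, hc j]) (by linarith [(hω k j).2])
    constructor
    · have := neg_abs_le (Real.log (1 + Xmin j))
      have hle := le_max_left |Real.log (1 + Xmin j)| |Real.log (1 + Xmax j)|
      linarith
    · have := le_abs_self (Real.log (1 + Xmax j))
      have hle := le_max_right |Real.log (1 + Xmin j)| |Real.log (1 + Xmax j)|
      linarith
  -- integrable: log S
  have hloSlo : (0:ℝ) < K j * (1 + Xmin j)^n := mul_pos hKj (pow_pos (hc j) n)
  have hSbnd : ∀ᵐ ω ∂(ℙ : Measure Ω),
      K j * (1 + Xmin j)^n ≤ S ω ∧ S ω ≤ ∑ i, K i * (1 + Xmax i)^n := by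
    filter_upwards [haeR] with ω hω
    constructor
    · calc K j * (1 + Xmin j)^n ≤ K j * compoundReturn X n ω j :=
            mul_le_mul_of_nonneg_left (hω j).1 (hK0 j)
        _ ≤ S ω := Finset.single_le_sum (f := fun i => K i * compoundReturn X n ω i)
            (fun i _ => mul_nonneg (hK0 i)
              (le_trans (pow_pos (hc i) n).le (hω i).1)) (Finset.mem_univ j)
    · exact Finset.sum_le_sum (fun i _ =>
        mul_le_mul_of_nonneg_left (hω i).2 (hK0 i))
  have hShi : K j * (1 + Xmin j)^n ≤ ∑ i, K i * (1 + Xmax i)^n := by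
    have := hSbnd.exists
    obtain ⟨ω₁, h₁, h₂⟩ := this
    linarith
  have hlogSint : Integrable (fun ω => Real.log (S ω)) ℙ := by
    refine hbddInt _ (max |Real.log (K j * (1 + Xmin j)^n)|
      |Real.log (∑ i, K i * (1 + Xmax i)^n)|) (Real.measurable_log.comp hSm) ?_
    filter_upwards [hSbnd] with ω hω
    rw [Real.norm_eq_abs, abs_le]
    have h1 : Real.log (K j * (1 + Xmin j)^n) ≤ Real.log (S ω) :=
      Real.log_le_log hloSlo hω.1
    have h2 : Real.log (S ω) ≤ Real.log (∑ i, K i * (1 + Xmax i)^n) :=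
      Real.log_le_log (lt_of_lt_of_le hloSlo hω.1) hω.2
    constructor
    · have := neg_abs_le (Real.log (K j * (1 + Xmin j)^n))
      have hle := le_max_left |Real.log (K j * (1 + Xmin j)^n)|
        |Real.log (∑ i, K i * (1 + Xmax i)^n)|
      linarith
    · have := le_abs_self (Real.log (∑ i, K i * (1 + Xmax i)^n))
      have hle := le_max_right |Real.log (K j * (1 + Xmin j)^n)|
        |Real.log (∑ i, K i * (1 + Xmax i)^n)|
      linarith
  -- step: integral of log of compound return of asset j
  have hlogR : ∫ ω, Real.log (compoundReturn X n ω j)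
      = n * ∫ ω, Real.log (1 + X 0 ω j) := by
    have h1 : (fun ω => Real.log (compoundReturn X n ω j))
        =ᵐ[(ℙ : Measure Ω)] fun ω => ∑ k ∈ Finset.range n, Real.log (1 + X k ω j) := by
      filter_upwards [hae] with ω hω
      exact Real.log_prod (fun k _ => (show (0:ℝ) < 1 + X k ω j by linarith [hc j, (hω k j).1]).ne')
    rw [integral_congr_ae h1, integral_finset_sum _ (fun k _ => hlogint k)]
    have h2 : ∀ k, ∫ ω, Real.log (1 + X k ω j) = ∫ ω, Real.log (1 + X 0 ω j) := by
      intro k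
      have := ((hident k).comp
        (u := fun v : Fin m → ℝ => Real.log (1 + v j))
        (Real.measurable_log.comp (measurable_const.add (measurable_pi_apply j)))).integral_eq
      simpa [Function.comp] using this
    rw [Finset.sum_congr rfl (fun k _ => h2 k)]
    simp [Finset.sum_const, Finset.card_range, nsmul_eq_mul]
  -- step: expectation of W i is at most 1
  have hWle : ∀ i, ∫ ω, W i ω ≤ 1 := by
    intro i
    by_cases hij : i = j
    · subst hij
      have h1 : W i =ᵐ[(ℙ : Measure Ω)] fun _ => (1:ℝ) := by
        filter_upwards [hae] with ω hω
        exact Finset.prod_eq_one (fun k _ => div_self (show (0:ℝ) < 1 + X k ω i by linarith [hc i, (hω k i).1]).ne')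
      rw [integral_congr_ae h1]
      simp
    · -- independence product
      set Y : ℕ → Ω → ℝ := fun k ω => (1 + X k ω i) / (1 + X k ω j) with hYdef
      have hYm : ∀ k, Measurable (Y k) := fun k =>
        (measurable_const.add (hXm k i)).div (measurable_const.add (hXm k j))
      have hYind : iIndepFun Y ℙ := by
        have := hiid.comp (g := fun _ (v : Fin m → ℝ) => (1 + v i) / (1 + v j))
          (fun _ => ((measurable_const.add (measurable_pi_apply i)).div
            (measurable_const.add (measurable_pi_apply j))))
        exact this
      have hint : ∫ ω, W i ω = ∏ k ∈ Finset.range n, ∫ ω, Y k ω :=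
        integral_prod_range_aux Y hYm hYind n
      have hYid : ∀ k, ∫ ω, Y k ω = ∫ ω, (1 + X 0 ω i) / (1 + X 0 ω j) := by
        intro k
        have := ((hident k).comp
          (u := fun v : Fin m → ℝ => (1 + v i) / (1 + v j))
          ((measurable_const.add (measurable_pi_apply i)).div
            (measurable_const.add (measurable_pi_apply j)))).integral_eq
        simpa [Function.comp] using this
      rw [hint, Finset.prod_congr rfl (fun k _ => hYid k), Finset.prod_const,
        Finset.card_range]
      have hE0 : (0:ℝ) ≤ ∫ ω, (1 + X 0 ω i) / (1 + X 0 ω j) := by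
        refine integral_nonneg_of_ae ?_
        filter_upwards [hae] with ω hω
        exact div_nonneg (by linarith [(hω 0 i).1, hc i]) (by linarith [(hω 0 j).1, hc j])
      exact pow_le_one₀ hE0 (hdom i hij)
  -- pointwise inequality
  have hptwise : ∀ᵐ ω ∂(ℙ : Measure Ω), Real.log (S ω) ≤
      Real.log (compoundReturn X n ω j) + Real.log (K j) - 1
        + (K j)⁻¹ * ∑ i, K i * W i ω := by
    filter_upwards [haeRpos, hae] with ω hpos hb
    have hRj : 0 < compoundReturn X n ω j := hpos j
    have hWval : ∀ i, W i ω = compoundReturn X n ω i / compoundReturn X n ω j := by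
      intro i
      simp only [hW, compoundReturn]
      rw [← Finset.prod_div_distrib]
    have hWj : W j ω = 1 := by rw [hWval j, div_self hRj.ne']
    set T : ℝ := ∑ i, K i * W i ω with hT
    have hfacS : S ω = compoundReturn X n ω j * T := by
      rw [hT, Finset.mul_sum]
      refine Finset.sum_congr rfl (fun i _ => ?_)
      rw [hWval i]
      field_simp
    have hWnn : ∀ i, 0 ≤ W i ω := by
      intro i
      rw [hWval i]
      exact div_nonneg (hpos i).le hRj.le
    have hTpos : 0 < T := by
      have : K j * W j ω ≤ T :=
        Finset.single_le_sum (f := fun i => K i * W i ω)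
          (fun i _ => mul_nonneg (hK0 i) (hWnn i)) (Finset.mem_univ j)
      rw [hWj, mul_one] at this
      linarith
    have hlogT : Real.log T ≤ Real.log (K j) - 1 + (K j)⁻¹ * T := by
      have h1 := Real.log_le_sub_one_of_pos (div_pos hTpos hKj)
      rw [Real.log_div hTpos.ne' hKj.ne'] at h1
      have h2 : T / K j = (K j)⁻¹ * T := by rw [div_eq_inv_mul]
      linarith [h1, h2 ▸ h1]
    rw [hfacS, Real.log_mul hRj.ne' hTpos.ne']
    linarith
  -- integrate
  have hrhsint : Integrable (fun ω => Real.log (compoundReturn X n ω j)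
      + Real.log (K j) - 1 + (K j)⁻¹ * ∑ i, K i * W i ω) ℙ := by
    have h1 : Integrable (fun ω => Real.log (compoundReturn X n ω j)) ℙ := by
      refine hbddInt _ (max |Real.log ((1 + Xmin j)^n)| |Real.log ((1 + Xmax j)^n)|)
        (Real.measurable_log.comp (hRm j)) ?_
      filter_upwards [haeR] with ω hω
      rw [Real.norm_eq_abs, abs_le]
      have h1 : Real.log ((1 + Xmin j)^n) ≤ Real.log (compoundReturn X n ω j) :=
        Real.log_le_log (pow_pos (hc j) n) (hω j).1
      have h2 : Real.log (compoundReturn X n ω j) ≤ Real.log ((1 + Xmax j)^n) :=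
        Real.log_le_log (lt_of_lt_of_le (pow_pos (hc j) n) (hω j).1) (hω j).2
      constructor
      · have := neg_abs_le (Real.log ((1 + Xmin j)^n))
        have hle := le_max_left |Real.log ((1 + Xmin j)^n)| |Real.log ((1 + Xmax j)^n)|
        linarith
      · have := le_abs_self (Real.log ((1 + Xmax j)^n))
        have hle := le_max_right |Real.log ((1 + Xmin j)^n)| |Real.log ((1 + Xmax j)^n)|
        linarith
    have h2 : Integrable (fun ω => ∑ i, K i * W i ω) ℙ :=
      integrable_finset_sum _ (fun i _ => (hWint i).const_mul (K i))
    exact ((h1.add (integrable_const _)).sub (integrable_const _)).add (h2.const_mul _)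
  have hkey : ∫ ω, Real.log (S ω) ≤
      n * (∫ ω, Real.log (1 + X 0 ω j)) + Real.log (K j) - 1 + (K j)⁻¹ := by
    have hstep := integral_mono_ae hlogSint hrhsint hptwise
    have h1 : Integrable (fun ω => Real.log (compoundReturn X n ω j)) ℙ := by
      have heq : (fun ω => Real.log (compoundReturn X n ω j))
          =ᵐ[(ℙ : Measure Ω)] fun ω => ∑ k ∈ Finset.range n, Real.log (1 + X k ω j) := by
        filter_upwards [hae] with ω hω
        exact Real.log_prod (fun k _ => (show (0:ℝ) < 1 + X k ω j by linarith [hc j, (hω k j).1]).ne')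
      exact (integrable_finset_sum _ (fun k _ => hlogint k)).congr heq.symm
    have h2 : Integrable (fun ω => ∑ i, K i * W i ω) ℙ :=
      integrable_finset_sum _ (fun i _ => (hWint i).const_mul (K i))
    have hcomp : ∫ ω, (Real.log (compoundReturn X n ω j) + Real.log (K j) - 1
        + (K j)⁻¹ * ∑ i, K i * W i ω)
        = (∫ ω, Real.log (compoundReturn X n ω j)) + Real.log (K j) - 1
          + (K j)⁻¹ * ∫ ω, ∑ i, K i * W i ω := by
      have hfb : Integrable (fun ω => Real.log (compoundReturn X n ω j) + Real.log (K j)) ℙ :=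
        h1.add (integrable_const _)
      have hfa : Integrable (fun ω => Real.log (compoundReturn X n ω j) + Real.log (K j) - 1) ℙ :=
        hfb.sub (integrable_const _)
      rw [integral_add hfa (h2.const_mul _), integral_const_mul,
        integral_sub hfb (integrable_const _), integral_add h1 (integrable_const _)]
      simp
    rw [hcomp, hlogR] at hstep
    have hsumW : ∫ ω, ∑ i, K i * W i ω = ∑ i, K i * ∫ ω, W i ω := by
      rw [integral_finset_sum _ (fun i _ => (hWint i).const_mul (K i))]
      exact Finset.sum_congr rfl (fun i _ => integral_const_mul _ _)
    have hsumle : ∑ i, K i * ∫ ω, W i ω ≤ 1 := by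
      calc ∑ i, K i * ∫ ω, W i ω ≤ ∑ i, K i * 1 :=
            Finset.sum_le_sum (fun i _ => by
              by_cases h0 : K i = 0
              · simp [h0]
              · exact mul_le_mul_of_nonneg_left (hWle i) (hK0 i))
        _ = 1 := by simp [hK1]
      
    have hmul : (K j)⁻¹ * (∫ ω, ∑ i, K i * W i ω) ≤ (K j)⁻¹ := by
      rw [hsumW]
      calc (K j)⁻¹ * (∑ i, K i * ∫ ω, W i ω) ≤ (K j)⁻¹ * 1 :=
            mul_le_mul_of_nonneg_left hsumle (inv_nonneg.2 hKj.le)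
        _ = (K j)⁻¹ := mul_one _
    linarith
  -- final arithmetic
  have hn' : (0:ℝ) < n := by exact_mod_cast hn
  have hninv : (0:ℝ) ≤ (n:ℝ)⁻¹ := (inv_pos.2 hn').le
  have hcancel : (n:ℝ)⁻¹ * (n:ℝ) = 1 := inv_mul_cancel₀ hn'.ne'
  rw [elg]
  have hIS : (n:ℝ)⁻¹ * (∫ ω, Real.log (∑ i, K i * compoundReturn X n ω i))
      = (n:ℝ)⁻¹ * ∫ ω, Real.log (S ω) := rfl
  rw [hIS]
  have hmul2 : (n:ℝ)⁻¹ * (∫ ω, Real.log (S ω)) ≤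
      (n:ℝ)⁻¹ * (n * (∫ ω, Real.log (1 + X 0 ω j)) + Real.log (K j) - 1 + (K j)⁻¹) :=
    mul_le_mul_of_nonneg_left hkey hninv
  have hexpand : (n:ℝ)⁻¹ * (n * (∫ ω, Real.log (1 + X 0 ω j)) + Real.log (K j) - 1 + (K j)⁻¹)
      = (∫ ω, Real.log (1 + X 0 ω j)) + (n:ℝ)⁻¹ * (Real.log (K j) - 1 + (K j)⁻¹) := by
    field_simp
    ring
  rw [hexpand] at hmul2
  have hlog1 : Real.log (1 / K j) = -Real.log (K j) := by
    rw [one_div, Real.log_inv]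
  rw [hlog1, one_div]
  nlinarith [hmul2]
end

section
/- Suppose some asset j ∈ {1, ..., m} is dominant. If K ∈ 𝒦 is any market portfolio with strictly positive weight on every asset, i.e. K_i > 0 for all i = 1, ..., m, then buying and holding K is asymptotically log-optimal: lim_{n → ∞} g_n(K) = g_1*, where g_1* = E[log(1 + X_j(0))]. -/
open MeasureTheory ProbabilityTheory Filter Topology Finset Real

/-- **Market portfolio corollary.** If the market contains a dominant asset `j` and `K` is a
market portfolio with strictly positive weight on every asset, then buy and hold on `K` is
asymptotically log-optimal. -/
theorem market_portfolio_asymptotically_log_optimal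
    {Ω : Type*} [MeasureSpace Ω] [IsProbabilityMeasure (ℙ : Measure Ω)]
    {m : ℕ} (hm : 2 ≤ m)
    (X : ℕ → Ω → Fin m → ℝ)
    (hmeas : ∀ k, Measurable (X k))
    (hiid : iIndepFun X ℙ)
    (hident : ∀ k, IdentDistrib (X k) (X 0) ℙ ℙ)
    (Xmin Xmax : Fin m → ℝ)
    (hXmin : ∀ i, -1 < Xmin i)
    (hbdd : ∀ k, ∀ᵐ ω ∂(ℙ : Measure Ω), ∀ i, Xmin i ≤ X k ω i ∧ X k ω i ≤ Xmax i)
    (j : Fin m)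
    (hdom : ∀ i, i ≠ j → ∫ ω, (1 + X 0 ω i) / (1 + X 0 ω j) ≤ 1)
    (K : Fin m → ℝ) (hK : K ∈ simplex m) (hKpos : ∀ i, 0 < K i) :
    Tendsto (fun n : ℕ => elg X n K) atTop (𝓝 (∫ ω, Real.log (1 + X 0 ω j))) := by
  classical
  obtain ⟨hK0, hK1⟩ := hK
  set gstar : ℝ := ∫ ω, Real.log (1 + X 0 ω j) with hgstar
  -- abbreviations
  set L : ℕ → Ω → ℝ := fun k ω => Real.log (1 + X k ω j) with hLdef
  set Y : Fin m → ℕ → Ω → ℝ := fun i k ω => (1 + X k ω i) / (1 + X k ω j) with hYdef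
  set S : ℕ → Ω → ℝ := fun n ω => ∑ i, K i * compoundReturn X n ω i with hSdef
  set T : Fin m → ℝ := fun i => 1 + Xmax i with hTdef
  set A : Fin m → ℝ := fun i => 1 + Xmin i with hAdef
  -- measurability of components
  have hXm : ∀ k i, Measurable fun ω => X k ω i := fun k i =>
    (measurable_pi_apply i).comp (hmeas k)
  have hE : ∀ᵐ ω ∂(ℙ : Measure Ω), ∀ k i, Xmin i ≤ X k ω i ∧ X k ω i ≤ Xmax i :=
    ae_all_iff.2 hbdd
  obtain ⟨ω0, hω0⟩ := hE.exists
  have hminmax : ∀ i, Xmin i ≤ Xmax i := fun i => le_trans (hω0 0 i).1 (hω0 0 i).2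
  have hApos : ∀ i, 0 < A i := fun i => by
    have := hXmin i; simp only [hAdef]; linarith
  have hTpos : ∀ i, 0 < T i := fun i =>
    lt_of_lt_of_le (hApos i) (by simp only [hAdef, hTdef]; linarith [hminmax i])
  -- pointwise bounds on the good set
  have hfac : ∀ ω, (∀ k i, Xmin i ≤ X k ω i ∧ X k ω i ≤ Xmax i) →
      ∀ k i, A i ≤ 1 + X k ω i ∧ 1 + X k ω i ≤ T i := by
    intro ω hω k i
    constructor
    · simp only [hAdef]; linarith [(hω k i).1]
    · simp only [hTdef]; linarith [(hω k i).2]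
  have hfacpos : ∀ ω, (∀ k i, Xmin i ≤ X k ω i ∧ X k ω i ≤ Xmax i) →
      ∀ k i, 0 < 1 + X k ω i := fun ω hω k i =>
    lt_of_lt_of_le (hApos i) (hfac ω hω k i).1
  have hRlo : ∀ ω, (∀ k i, Xmin i ≤ X k ω i ∧ X k ω i ≤ Xmax i) →
      ∀ n i, A i ^ n ≤ compoundReturn X n ω i := by
    intro ω hω n i
    have : A i ^ n = ∏ _k ∈ Finset.range n, A i := by
      rw [Finset.prod_const, Finset.card_range]
    rw [this, compoundReturn]
    exact Finset.prod_le_prod (fun k _ => (hApos i).le) (fun k _ => (hfac ω hω k i).1)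
  have hRhi : ∀ ω, (∀ k i, Xmin i ≤ X k ω i ∧ X k ω i ≤ Xmax i) →
      ∀ n i, compoundReturn X n ω i ≤ T i ^ n := by
    intro ω hω n i
    have : T i ^ n = ∏ _k ∈ Finset.range n, T i := by
      rw [Finset.prod_const, Finset.card_range]
    rw [this, compoundReturn]
    exact Finset.prod_le_prod (fun k _ => (hfacpos ω hω k i).le) (fun k _ => (hfac ω hω k i).2)
  have hRpos : ∀ ω, (∀ k i, Xmin i ≤ X k ω i ∧ X k ω i ≤ Xmax i) →
      ∀ n i, 0 < compoundReturn X n ω i := fun ω hω n i =>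
    lt_of_lt_of_le (pow_pos (hApos i) n) (hRlo ω hω n i)
  have hSlo : ∀ ω, (∀ k i, Xmin i ≤ X k ω i ∧ X k ω i ≤ Xmax i) →
      ∀ n, K j * compoundReturn X n ω j ≤ S n ω := by
    intro ω hω n
    exact Finset.single_le_sum
      (f := fun i => K i * compoundReturn X n ω i)
      (fun i _ => mul_nonneg (hK0 i) (hRpos ω hω n i).le) (Finset.mem_univ j)
  have hSlo' : ∀ ω, (∀ k i, Xmin i ≤ X k ω i ∧ X k ω i ≤ Xmax i) →
      ∀ n, K j * A j ^ n ≤ S n ω := fun ω hω n =>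
    le_trans (mul_le_mul_of_nonneg_left (hRlo ω hω n j) (hK0 j)) (hSlo ω hω n)
  have hShi : ∀ ω, (∀ k i, Xmin i ≤ X k ω i ∧ X k ω i ≤ Xmax i) →
      ∀ n, S n ω ≤ ∑ i, K i * T i ^ n := by
    intro ω hω n
    exact Finset.sum_le_sum fun i _ =>
      mul_le_mul_of_nonneg_left (hRhi ω hω n i) (hK0 i)
  have hSpos : ∀ ω, (∀ k i, Xmin i ≤ X k ω i ∧ X k ω i ≤ Xmax i) →
      ∀ n, 0 < S n ω := fun ω hω n =>
    lt_of_lt_of_le (mul_pos (hKpos j) (pow_pos (hApos j) n)) (hSlo' ω hω n)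
  -- helper : |x| bound from two-sided bounds
  have habs : ∀ x lo hi : ℝ, lo ≤ x → x ≤ hi → |x| ≤ |lo| + |hi| := fun x lo hi h1 h2 =>
    abs_le.2 ⟨by linarith [neg_abs_le lo, abs_nonneg hi],
              by linarith [le_abs_self hi, abs_nonneg lo]⟩
  -- integrability helper
  have hIntOf : ∀ (f : Ω → ℝ) (C : ℝ), Measurable f →
      (∀ᵐ ω ∂(ℙ : Measure Ω), |f ω| ≤ C) → Integrable f (ℙ : Measure Ω) := by
    intro f C hf hb
    exact (integrable_const C).mono' hf.aestronglyMeasurable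
      (by simpa [Real.norm_eq_abs] using hb)
  -- measurability of main objects
  have hRm : ∀ n i, Measurable fun ω => compoundReturn X n ω i := by
    intro n i
    unfold compoundReturn
    exact Finset.measurable_prod _ fun k _ => measurable_const.add (hXm k i)
  have hSm : ∀ n, Measurable (S n) := fun n =>
    Finset.measurable_sum _ fun i _ => measurable_const.mul (hRm n i)
  have hYm : ∀ i k, Measurable (Y i k) := fun i k =>
    (measurable_const.add (hXm k i)).div (measurable_const.add (hXm k j))
  have hLm : ∀ k, Measurable (L k) := fun k =>
    (measurable_const.add (hXm k j)).log
  -- integrability and integral of L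
  have hLint : ∀ k, Integrable (L k) (ℙ : Measure Ω) := by
    intro k
    apply hIntOf (L k) (|Real.log (A j)| + |Real.log (T j)|) (hLm k)
    filter_upwards [hE] with ω hω
    have h1 := (hfac ω hω k j).1
    have h2 := (hfac ω hω k j).2
    exact habs _ _ _ (Real.log_le_log (hApos j) h1)
      (Real.log_le_log (hfacpos ω hω k j) h2)
  have hLeq : ∀ k, ∫ ω, L k ω = gstar := by
    intro k
    have h := ((hident k).comp (u := fun v : Fin m → ℝ => Real.log (1 + v j))
      (Real.measurable_log.comp (measurable_const.add (measurable_pi_apply j)))).integral_eq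
    simpa [Function.comp, hLdef, hgstar] using h
  have hsumLint : ∀ n, Integrable (fun ω => ∑ k ∈ Finset.range n, L k ω) (ℙ : Measure Ω) :=
    fun n => integrable_finset_sum _ fun k _ => hLint k
  have hsumLeq : ∀ n : ℕ, (∫ ω, ∑ k ∈ Finset.range n, L k ω) = n * gstar := by
    intro n
    rw [integral_finset_sum _ fun k _ => hLint k]
    simp [hLeq, Finset.sum_const, Finset.card_range, nsmul_eq_mul]
  -- log S integrable
  have hlogSm : ∀ n, Measurable fun ω => Real.log (S n ω) := fun n => (hSm n).log
  have hlogSint : ∀ n, Integrable (fun ω => Real.log (S n ω)) (ℙ : Measure Ω) := by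
    intro n
    apply hIntOf _ (|Real.log (K j * A j ^ n)| + |Real.log (∑ i, K i * T i ^ n)|) (hlogSm n)
    filter_upwards [hE] with ω hω
    exact habs _ _ _
      (Real.log_le_log (mul_pos (hKpos j) (pow_pos (hApos j) n)) (hSlo' ω hω n))
      (Real.log_le_log (hSpos ω hω n) (hShi ω hω n))
  -- log of compound return of j equals sum of L
  have hlogR : ∀ ω, (∀ k i, Xmin i ≤ X k ω i ∧ X k ω i ≤ Xmax i) →
      ∀ n, Real.log (compoundReturn X n ω j) = ∑ k ∈ Finset.range n, L k ω := by
    intro ω hω n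
    rw [compoundReturn]
    exact Real.log_prod fun k _ => (hfacpos ω hω k j).ne'
  -- lower bound : log K j + n * gstar ≤ ∫ log (S n)
  have hlow : ∀ n : ℕ, Real.log (K j) + n * gstar ≤ ∫ ω, Real.log (S n ω) := by
    intro n
    have hintlhs : Integrable (fun ω => Real.log (K j) + ∑ k ∈ Finset.range n, L k ω)
        (ℙ : Measure Ω) := (integrable_const _).add (hsumLint n)
    have hmono : (∫ ω, (Real.log (K j) + ∑ k ∈ Finset.range n, L k ω)) ≤
        ∫ ω, Real.log (S n ω) := by
      apply integral_mono_ae hintlhs (hlogSint n)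
      filter_upwards [hE] with ω hω
      have h1 : Real.log (K j * compoundReturn X n ω j) ≤ Real.log (S n ω) :=
        Real.log_le_log (mul_pos (hKpos j) (hRpos ω hω n j)) (hSlo ω hω n)
      rw [Real.log_mul (hKpos j).ne' (hRpos ω hω n j).ne', hlogR ω hω n] at h1
      exact h1
    calc Real.log (K j) + n * gstar
        = ∫ ω, (Real.log (K j) + ∑ k ∈ Finset.range n, L k ω) := by
          rw [integral_add (integrable_const _) (hsumLint n), integral_const,
            probReal_univ, smul_eq_mul, one_mul, hsumLeq n]
      _ ≤ _ := hmono
  -- independence of the ratio processes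
  have hYindep : ∀ i, iIndepFun
      (fun k => Y i k) ℙ := by
    intro i
    have hg : Measurable fun v : Fin m → ℝ => (1 + v i) / (1 + v j) :=
      (measurable_const.add (measurable_pi_apply i)).div
        (measurable_const.add (measurable_pi_apply j))
    exact hiid.comp (fun _ v => (1 + v i) / (1 + v j)) fun _ => hg
  have hYid : ∀ i k, (∫ ω, Y i k ω) = ∫ ω, Y i 0 ω := by
    intro i k
    have h := ((hident k).comp (u := fun v : Fin m → ℝ => (1 + v i) / (1 + v j))
      ((measurable_const.add (measurable_pi_apply i)).div
        (measurable_const.add (measurable_pi_apply j)))).integral_eq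
    simpa [Function.comp, hYdef] using h
  -- integral of products of ratios
  have hPint : ∀ i n, (∫ ω, ∏ k ∈ Finset.range n, Y i k ω) = (∫ ω, Y i 0 ω) ^ n := by
    intro i n
    induction n with
    | zero => simp
    | succ n ih =>
      have hprodfn : (∏ k ∈ Finset.range n, Y i k) = fun ω => ∏ k ∈ Finset.range n, Y i k ω := by
        funext ω; simp
      have hind : IndepFun (fun ω => ∏ k ∈ Finset.range n, Y i k ω) (Y i n) ℙ := by
        have h := (hYindep i).indepFun_prod_range_succ (fun k => hYm i k) n
        rwa [hprodfn] at h
      have hmul := hind.integral_mul_eq_mul_integral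
        ((Finset.measurable_prod _ fun k _ => hYm i k).aestronglyMeasurable)
        (hYm i n).aestronglyMeasurable
      have hmul' : (∫ ω, (∏ k ∈ Finset.range n, Y i k ω) * Y i n ω) =
          (∫ ω, ∏ k ∈ Finset.range n, Y i k ω) * ∫ ω, Y i n ω := by
        simpa [Pi.mul_apply] using hmul
      calc (∫ ω, ∏ k ∈ Finset.range (n + 1), Y i k ω)
          = ∫ ω, (∏ k ∈ Finset.range n, Y i k ω) * Y i n ω := by
            have hps : (fun ω => ∏ k ∈ Finset.range (n + 1), Y i k ω) =
                fun ω => (∏ k ∈ Finset.range n, Y i k ω) * Y i n ω := by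
              funext ω; exact Finset.prod_range_succ _ _
            rw [hps]
        _ = (∫ ω, ∏ k ∈ Finset.range n, Y i k ω) * ∫ ω, Y i n ω := hmul'
        _ = (∫ ω, Y i 0 ω) ^ (n + 1) := by rw [ih, hYid i n, pow_succ]
  have hY0nonneg : ∀ i, 0 ≤ ∫ ω, Y i 0 ω := by
    intro i
    apply integral_nonneg_of_ae
    filter_upwards [hE] with ω hω
    exact div_nonneg (hfacpos ω hω 0 i).le (hfacpos ω hω 0 j).le
  have hY0le1 : ∀ i, (∫ ω, Y i 0 ω) ≤ 1 := by
    intro i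
    by_cases hij : i = j
    · subst hij
      have heq : Y i 0 =ᵐ[(ℙ : Measure Ω)] fun _ => 1 := by
        filter_upwards [hE] with ω hω
        exact div_self (hfacpos ω hω 0 i).ne'
      rw [integral_congr_ae heq]
      simp
    · exact hdom i hij
  -- integrability of the product of ratios
  have hPintg : ∀ i n, Integrable (fun ω => ∏ k ∈ Finset.range n, Y i k ω) (ℙ : Measure Ω) := by
    intro i n
    apply hIntOf _ ((T i / A j) ^ n) (Finset.measurable_prod _ fun k _ => hYm i k)
    filter_upwards [hE] with ω hω
    have h1 : ∀ k, 0 ≤ Y i k ω := fun k =>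
      div_nonneg (hfacpos ω hω k i).le (hfacpos ω hω k j).le
    have h2 : ∀ k, Y i k ω ≤ T i / A j := fun k =>
      div_le_div₀ (hTpos i).le (hfac ω hω k i).2 (hApos j) (hfac ω hω k j).1
    have hnn : 0 ≤ ∏ k ∈ Finset.range n, Y i k ω :=
      Finset.prod_nonneg fun k _ => h1 k
    rw [abs_of_nonneg hnn]
    have : (T i / A j) ^ n = ∏ _k ∈ Finset.range n, (T i / A j) := by
      rw [Finset.prod_const, Finset.card_range]
    rw [this]
    exact Finset.prod_le_prod (fun k _ => h1 k) (fun k _ => h2 k)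
  -- upper bound : ∫ log (S n) ≤ n * gstar
  have hup : ∀ n : ℕ, (∫ ω, Real.log (S n ω)) ≤ n * gstar := by
    intro n
    -- the majorant
    set G : Ω → ℝ := fun ω =>
      (∑ k ∈ Finset.range n, L k ω) + ((∑ i, K i * ∏ k ∈ Finset.range n, Y i k ω) - 1)
      with hGdef
    have hTint : Integrable (fun ω => ∑ i, K i * ∏ k ∈ Finset.range n, Y i k ω)
        (ℙ : Measure Ω) :=
      integrable_finset_sum _ fun i _ => (hPintg i n).const_mul (K i)
    have hGint : Integrable G (ℙ : Measure Ω) :=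
      (hsumLint n).add (hTint.sub (integrable_const 1))
    have hmono : (∫ ω, Real.log (S n ω)) ≤ ∫ ω, G ω := by
      apply integral_mono_ae (hlogSint n) hGint
      filter_upwards [hE] with ω hω
      have hRjpos := hRpos ω hω n j
      -- T value
      have hTval : ∀ i, K i * compoundReturn X n ω i =
          compoundReturn X n ω j * (K i * ∏ k ∈ Finset.range n, Y i k ω) := by
        intro i
        have hprod : (∏ k ∈ Finset.range n, Y i k ω) =
            compoundReturn X n ω i / compoundReturn X n ω j := by
          rw [compoundReturn, compoundReturn, ← Finset.prod_div_distrib]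
        rw [hprod]
        field_simp
      have hSfact : S n ω = compoundReturn X n ω j *
          (∑ i, K i * ∏ k ∈ Finset.range n, Y i k ω) := by
        rw [hSdef]
        simp only
        rw [Finset.mul_sum]
        exact Finset.sum_congr rfl fun i _ => hTval i
      have hTpos' : 0 < ∑ i, K i * ∏ k ∈ Finset.range n, Y i k ω := by
        have h := hSpos ω hω n
        rw [hSfact] at h
        rcases mul_pos_iff.mp h with ⟨_, h2⟩ | ⟨h1, _⟩
        · exact h2
        · linarith
      have hlogS : Real.log (S n ω) = (∑ k ∈ Finset.range n, L k ω) +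
          Real.log (∑ i, K i * ∏ k ∈ Finset.range n, Y i k ω) := by
        rw [hSfact, Real.log_mul hRjpos.ne' hTpos'.ne', hlogR ω hω n]
      rw [hlogS, hGdef]
      have := Real.log_le_sub_one_of_pos hTpos'
      simp only
      linarith
    have hTsum : (∫ ω, ∑ i, K i * ∏ k ∈ Finset.range n, Y i k ω) =
        ∑ i, K i * (∫ ω, Y i 0 ω) ^ n := by
      rw [integral_finset_sum _ fun i _ => (hPintg i n).const_mul (K i)]
      refine Finset.sum_congr rfl fun i _ => ?_
      rw [integral_const_mul, hPint]
    have hTle1 : (∫ ω, ∑ i, K i * ∏ k ∈ Finset.range n, Y i k ω) ≤ 1 := by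
      rw [hTsum]
      calc ∑ i, K i * (∫ ω, Y i 0 ω) ^ n ≤ ∑ i, K i * 1 :=
            Finset.sum_le_sum fun i _ => mul_le_mul_of_nonneg_left
              (pow_le_one₀ (hY0nonneg i) (hY0le1 i)) (hK0 i)
        _ = 1 := by simpa using hK1
    have hGeq : (∫ ω, G ω) = n * gstar +
        ((∫ ω, ∑ i, K i * ∏ k ∈ Finset.range n, Y i k ω) - 1) := by
      have hsub : Integrable
          (fun ω => (∑ i, K i * ∏ k ∈ Finset.range n, Y i k ω) - 1) (ℙ : Measure Ω) :=
        hTint.sub (integrable_const 1)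
      simp only [hGdef]
      rw [integral_add (hsumLint n) hsub, hsumLeq n,
        integral_sub hTint (integrable_const 1), integral_const, probReal_univ,
        smul_eq_mul, one_mul]
    calc (∫ ω, Real.log (S n ω)) ≤ ∫ ω, G ω := hmono
      _ ≤ n * gstar := by rw [hGeq]; linarith [hTle1]
  -- squeeze
  have hlowe : ∀ n : ℕ, 1 ≤ n → Real.log (K j) / n + gstar ≤ elg X n K := by
    intro n hn
    have hnpos : (0 : ℝ) < n := by exact_mod_cast hn
    have heq : Real.log (K j) / n + gstar = (n : ℝ)⁻¹ * (Real.log (K j) + n * gstar) := by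
      field_simp
    have : elg X n K = (n : ℝ)⁻¹ * ∫ ω, Real.log (S n ω) := rfl
    rw [this, heq]
    exact mul_le_mul_of_nonneg_left (hlow n) (inv_nonneg.2 hnpos.le)
  have hupe : ∀ n : ℕ, 1 ≤ n → elg X n K ≤ gstar := by
    intro n hn
    have hnpos : (0 : ℝ) < n := by exact_mod_cast hn
    have : elg X n K = (n : ℝ)⁻¹ * ∫ ω, Real.log (S n ω) := rfl
    rw [this]
    calc (n : ℝ)⁻¹ * ∫ ω, Real.log (S n ω) ≤ (n : ℝ)⁻¹ * (n * gstar) :=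
          mul_le_mul_of_nonneg_left (hup n) (inv_nonneg.2 hnpos.le)
      _ = gstar := by rw [← mul_assoc, inv_mul_cancel₀ hnpos.ne', one_mul]
  have h1 : Tendsto (fun n : ℕ => Real.log (K j) / n + gstar) atTop (𝓝 gstar) := by
    have h0 := tendsto_const_div_atTop_nhds_zero_nat (Real.log (K j))
    simpa using h0.add (tendsto_const_nhds (x := gstar))
  exact tendsto_of_tendsto_of_tendsto_of_le_of_le' h1 tendsto_const_nhds
    (eventually_atTop.2 ⟨1, fun n hn => hlowe n hn⟩)
    (eventually_atTop.2 ⟨1, fun n hn => hupe n hn⟩)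
end

section
/- Assume additionally that for every n ≥ 1 the compound return vector R_n (equivalently 𝒳_n = R_n − 1) and the next one-period return vector X(n) are independent. Then high-frequency rebalancing is unbeatable in the expected-log-growth sense: g_n* ≤ g_1* for every n ≥ 1. -/
open MeasureTheory ProbabilityTheory Filter Topology Finset Real

lemma aux_abs_log_le_s7 {L U v : ℝ} (hL : 0 < L) (h1 : L ≤ v) (h2 : v ≤ U) :
    |Real.log v| ≤ max |Real.log L| |Real.log U| := by
  have hv : 0 < v := hL.trans_le h1
  rw [abs_le]
  constructor
  · calc -(max |Real.log L| |Real.log U|) ≤ -|Real.log L| := by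
          simp [le_max_left]
        _ ≤ Real.log L := neg_abs_le _
        _ ≤ Real.log v := Real.log_le_log hL h1
  · calc Real.log v ≤ Real.log U := Real.log_le_log hv h2
        _ ≤ |Real.log U| := le_abs_self _
        _ ≤ _ := le_max_right _ _

lemma aux_sum_bounds {m : ℕ} {K : Fin m → ℝ} (hK : K ∈ simplex m) {r : Fin m → ℝ} {L U : ℝ}
    (hl : ∀ i, L ≤ r i) (hu : ∀ i, r i ≤ U) :
    L ≤ ∑ i, K i * r i ∧ ∑ i, K i * r i ≤ U := by
  obtain ⟨hK0, hK1⟩ := hK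
  constructor
  · calc L = (∑ i, K i) * L := by rw [hK1, one_mul]
        _ = ∑ i, K i * L := Finset.sum_mul ..
        _ ≤ ∑ i, K i * r i :=
          Finset.sum_le_sum fun i _ => mul_le_mul_of_nonneg_left (hl i) (hK0 i)
  · calc ∑ i, K i * r i ≤ ∑ i, K i * U :=
          Finset.sum_le_sum fun i _ => mul_le_mul_of_nonneg_left (hu i) (hK0 i)
        _ = (∑ i, K i) * U := (Finset.sum_mul ..).symm
        _ = U := by rw [hK1, one_mul]

lemma aux_log_int {α : Type*} {mα : MeasurableSpace α} {μ : Measure α}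
    [IsProbabilityMeasure μ]
    {f : α → ℝ} (hf : Measurable f) {L U : ℝ} (hL : 0 < L)
    (hb : ∀ᵐ ω ∂μ, L ≤ f ω ∧ f ω ≤ U) :
    Integrable (fun ω => Real.log (f ω)) μ := by
  refine (integrable_const (max |Real.log L| |Real.log U|)).mono'
    (Real.measurable_log.comp hf).aestronglyMeasurable ?_
  filter_upwards [hb] with ω hω
  simpa [Real.norm_eq_abs] using aux_abs_log_le_s7 hL hω.1 hω.2

lemma aux_log_integral_le {α : Type*} {mα : MeasurableSpace α} {μ : Measure α}
    [IsProbabilityMeasure μ]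
    {f : α → ℝ} (hf : Measurable f) {L U : ℝ} (hL : 0 < L)
    (hb : ∀ᵐ ω ∂μ, L ≤ f ω ∧ f ω ≤ U) :
    ∫ ω, Real.log (f ω) ∂μ ≤ max |Real.log L| |Real.log U| := by
  calc ∫ ω, Real.log (f ω) ∂μ
      ≤ ∫ _ω, max |Real.log L| |Real.log U| ∂μ := by
        refine integral_mono_ae (aux_log_int hf hL hb) (integrable_const _) ?_
        filter_upwards [hb] with ω hω
        exact (le_abs_self _).trans (aux_abs_log_le_s7 hL hω.1 hω.2)
    _ = max |Real.log L| |Real.log U| := by simp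

/-- The integrand after one splitting step. -/
noncomputable def auxF {m : ℕ} (K : Fin m → ℝ) (p : (Fin m → ℝ) × (Fin m → ℝ)) : ℝ :=
  Real.log (∑ i, K i * (p.1 i * (1 + p.2 i)))

lemma auxF_measurable {m : ℕ} (K : Fin m → ℝ) : Measurable (auxF K) := by
  apply Real.measurable_log.comp
  apply Finset.measurable_sum
  intro i _
  exact measurable_const.mul (((measurable_pi_apply i).comp measurable_fst).mul
    (measurable_const.add ((measurable_pi_apply i).comp measurable_snd)))

/-- The key one-step decomposition bound: conditionally on the past returns `r`,
the expected log of the next compound value splits as `log (Kᵀ r)` plus the expected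
log-growth of the rebalanced portfolio `K'`, which is at most `g1`. -/
lemma aux_inner {m : ℕ} [Nonempty (Fin m)] {ν : Measure (Fin m → ℝ)} [IsProbabilityMeasure ν]
    {K r : Fin m → ℝ} (hK : K ∈ simplex m) (hrpos : ∀ i, 0 < r i)
    {cc dd : Fin m → ℝ} (hcc : ∀ i, 0 < cc i)
    (hνbd : ∀ᵐ x ∂ν, ∀ i, cc i ≤ 1 + x i ∧ 1 + x i ≤ dd i)
    {g1 : ℝ}
    (hg1 : ∀ K', K' ∈ simplex m → ∫ x, Real.log (∑ i, K' i * (1 + x i)) ∂ν ≤ g1) :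
    ∫ x, auxF K (r, x) ∂ν ≤ Real.log (∑ i, K i * r i) + g1 := by
  have hne : (Finset.univ : Finset (Fin m)).Nonempty := Finset.univ_nonempty
  have hrL : ∀ i, Finset.univ.inf' hne r ≤ r i := fun i => Finset.inf'_le _ (Finset.mem_univ i)
  have hrU : ∀ i, r i ≤ Finset.univ.sup' hne r := fun i => Finset.le_sup' _ (Finset.mem_univ i)
  have hS0 : 0 < ∑ i, K i * r i := by
    refine lt_of_lt_of_le ?_ (aux_sum_bounds hK hrL hrU).1
    simp only [Finset.lt_inf'_iff]
    exact fun i _ => hrpos i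
  set S := ∑ i, K i * r i with hS_def
  set K' : Fin m → ℝ := fun i => K i * r i / S with hK'_def
  clear_value S K'
  have hK' : K' ∈ simplex m := by
    constructor
    · intro i
      simp only [hK'_def]
      exact div_nonneg (mul_nonneg (hK.1 i) (hrpos i).le) hS0.le
    · simp only [hK'_def]
      rw [← Finset.sum_div, ← hS_def]
      exact div_self hS0.ne'
  have hccL : ∀ i, Finset.univ.inf' hne cc ≤ cc i :=
    fun i => Finset.inf'_le _ (Finset.mem_univ i)
  have hddU : ∀ i, dd i ≤ Finset.univ.sup' hne dd :=
    fun i => Finset.le_sup' _ (Finset.mem_univ i)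
  have hL1 : 0 < Finset.univ.inf' hne cc := by
    simp only [Finset.lt_inf'_iff]
    exact fun i _ => hcc i
  have hνbd' : ∀ᵐ x ∂ν, ∀ i,
      Finset.univ.inf' hne cc ≤ 1 + x i ∧ 1 + x i ≤ Finset.univ.sup' hne dd := by
    filter_upwards [hνbd] with x hx i
    exact ⟨(hccL i).trans (hx i).1, (hx i).2.trans (hddU i)⟩
  have hg'meas : Measurable fun x : Fin m → ℝ => ∑ i, K' i * (1 + x i) :=
    Finset.measurable_sum _ fun i _ =>
      measurable_const.mul (measurable_const.add (measurable_pi_apply i))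
  have hg'bd : ∀ᵐ x ∂ν, Finset.univ.inf' hne cc ≤ ∑ i, K' i * (1 + x i) ∧
      ∑ i, K' i * (1 + x i) ≤ Finset.univ.sup' hne dd := by
    filter_upwards [hνbd'] with x hx
    exact aux_sum_bounds hK' (fun i => (hx i).1) (fun i => (hx i).2)
  have hg'int : Integrable (fun x => Real.log (∑ i, K' i * (1 + x i))) ν :=
    aux_log_int hg'meas hL1 hg'bd
  have hpt : ∀ᵐ x ∂ν, auxF K (r, x) = Real.log S + Real.log (∑ i, K' i * (1 + x i)) := by
    filter_upwards [hνbd'] with x hx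
    have hpos2 : 0 < ∑ i, K' i * (1 + x i) :=
      hL1.trans_le (aux_sum_bounds hK' (fun i => (hx i).1) (fun i => (hx i).2)).1
    have hsum_eq : ∑ i, K i * (r i * (1 + x i)) = S * ∑ i, K' i * (1 + x i) := by
      rw [Finset.mul_sum]
      refine Finset.sum_congr rfl fun i _ => ?_
      rw [hK'_def]
      field_simp
    show Real.log (∑ i, K i * (r i * (1 + x i))) = _
    rw [hsum_eq, Real.log_mul hS0.ne' hpos2.ne']
  calc ∫ x, auxF K (r, x) ∂ν
      = ∫ x, (Real.log S + Real.log (∑ i, K' i * (1 + x i))) ∂ν := integral_congr_ae hpt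
    _ = Real.log S + ∫ x, Real.log (∑ i, K' i * (1 + x i)) ∂ν := by
        rw [integral_add (integrable_const _) hg'int, integral_const]
        simp
    _ ≤ Real.log S + g1 := by
        have := hg1 K' hK'
        linarith

/-- **High-frequency maximality (under an independence hypothesis).** If for every `n ≥ 1` the
compound return vector `R_n` and the next one-period return vector `X(n)` are independent,
then `g_n^* ≤ g_1^*` for all `n ≥ 1`: high-frequency rebalancing is unbeatable in the ELG
sense. -/
theorem high_frequency_maximality
    {Ω : Type*} [MeasureSpace Ω] [IsProbabilityMeasure (ℙ : Measure Ω)]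
    {m : ℕ} (hm : 2 ≤ m)
    (X : ℕ → Ω → Fin m → ℝ)
    (hmeas : ∀ k, Measurable (X k))
    (hiid : iIndepFun X ℙ)
    (hident : ∀ k, IdentDistrib (X k) (X 0) ℙ ℙ)
    (Xmin Xmax : Fin m → ℝ)
    (hXmin : ∀ i, -1 < Xmin i)
    (hbdd : ∀ k, ∀ᵐ ω ∂(ℙ : Measure Ω), ∀ i, Xmin i ≤ X k ω i ∧ X k ω i ≤ Xmax i)
    (hRindep : ∀ n : ℕ, 1 ≤ n →
      IndepFun (fun ω => compoundReturn X n ω) (X n) ℙ) :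
    ∀ n : ℕ, 1 ≤ n →
      sSup (elg X n '' simplex m) ≤ sSup (elg X 1 '' simplex m) := by
  intro n hn
  haveI : Nonempty (Fin m) := ⟨⟨0, by omega⟩⟩
  have hne : (Finset.univ : Finset (Fin m)).Nonempty := Finset.univ_nonempty
  have hc : ∀ i, 0 < 1 + Xmin i := fun i => by have := hXmin i; linarith
  have hPne : (ℙ : Measure Ω) ≠ 0 := IsProbabilityMeasure.ne_zero _
  haveI : (MeasureTheory.ae (ℙ : Measure Ω)).NeBot := ae_neBot.mpr hPne
  obtain ⟨ω₀, hω₀⟩ := (hbdd 0).exists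
  have hcd : ∀ i, 1 + Xmin i ≤ 1 + Xmax i := fun i => by
    have h1 := (hω₀ i).1; have h2 := (hω₀ i).2; linarith
  have hd : ∀ i, 0 < 1 + Xmax i := fun i => (hc i).trans_le (hcd i)
  -- measurability of compound returns
  have hRmeas : ∀ N : ℕ, Measurable (fun ω => compoundReturn X N ω) := by
    intro N
    apply measurable_pi_lambda
    intro i
    show Measurable fun ω => ∏ k ∈ Finset.range N, (1 + X k ω i)
    exact Finset.measurable_prod _ fun k _ =>
      measurable_const.add ((measurable_pi_apply i).comp (hmeas k))
  -- a.s. bounds on compound returns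
  have hRbd : ∀ N : ℕ, ∀ᵐ ω ∂(ℙ : Measure Ω),
      ∀ i, (1 + Xmin i) ^ N ≤ compoundReturn X N ω i ∧
        compoundReturn X N ω i ≤ (1 + Xmax i) ^ N := by
    intro N
    have hall : ∀ᵐ ω ∂(ℙ : Measure Ω), ∀ k, ∀ i, Xmin i ≤ X k ω i ∧ X k ω i ≤ Xmax i :=
      ae_all_iff.mpr hbdd
    filter_upwards [hall] with ω hω i
    constructor
    · calc (1 + Xmin i) ^ N = ∏ _k ∈ Finset.range N, (1 + Xmin i) := by
            rw [Finset.prod_const, Finset.card_range]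
        _ ≤ ∏ k ∈ Finset.range N, (1 + X k ω i) := by
            refine Finset.prod_le_prod (fun k _ => (hc i).le) (fun k _ => ?_)
            have := (hω k i).1; linarith
    · calc compoundReturn X N ω i = ∏ k ∈ Finset.range N, (1 + X k ω i) := rfl
        _ ≤ ∏ _k ∈ Finset.range N, (1 + Xmax i) := by
            refine Finset.prod_le_prod (fun k _ => ?_) (fun k _ => ?_)
            · have := (hω k i).1; have := hc i; linarith
            · have := (hω k i).2; linarith
        _ = (1 + Xmax i) ^ N := by rw [Finset.prod_const, Finset.card_range]
  -- per-horizon uniform bounds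
  have hLpos : ∀ N : ℕ, 0 < Finset.univ.inf' hne (fun i => (1 + Xmin i) ^ N) := by
    intro N
    simp only [Finset.lt_inf'_iff]
    exact fun i _ => pow_pos (hc i) N
  have hRbd' : ∀ N : ℕ, ∀ᵐ ω ∂(ℙ : Measure Ω),
      ∀ i, Finset.univ.inf' hne (fun i => (1 + Xmin i) ^ N) ≤ compoundReturn X N ω i ∧
        compoundReturn X N ω i ≤ Finset.univ.sup' hne (fun i => (1 + Xmax i) ^ N) := by
    intro N
    filter_upwards [hRbd N] with ω hω i
    exact ⟨(Finset.inf'_le _ (Finset.mem_univ i)).trans (hω i).1,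
      (hω i).2.trans (Finset.le_sup' (fun i => (1 + Xmax i) ^ N) (Finset.mem_univ i))⟩
  -- integrability
  have hInt : ∀ (N : ℕ) (K : Fin m → ℝ), K ∈ simplex m →
      Integrable (fun ω => Real.log (∑ i, K i * compoundReturn X N ω i)) ℙ := by
    intro N K hK
    have hsmeas : Measurable fun ω => ∑ i, K i * compoundReturn X N ω i :=
      Finset.measurable_sum _ fun i _ =>
        measurable_const.mul ((measurable_pi_apply i).comp (hRmeas N))
    refine aux_log_int (U := Finset.univ.sup' hne fun i => (1 + Xmax i) ^ N)
      hsmeas (hLpos N) ?_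
    filter_upwards [hRbd' N] with ω hω
    exact aux_sum_bounds hK (fun i => (hω i).1) (fun i => (hω i).2)
  -- simplex is nonempty
  have hK0 : (fun _ : Fin m => (m : ℝ)⁻¹) ∈ simplex m := by
    constructor
    · intro i; positivity
    · have hm0 : (m : ℝ) ≠ 0 := by positivity
      simp [Finset.sum_const, Finset.card_univ, mul_inv_cancel₀ hm0]
  -- boundedness of the elg X 1 image
  have hBdd : BddAbove (elg X 1 '' simplex m) := by
    refine ⟨max |Real.log (Finset.univ.inf' hne (fun i => (1 + Xmin i) ^ 1))|
      |Real.log (Finset.univ.sup' hne (fun i => (1 + Xmax i) ^ 1))|, ?_⟩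
    rintro y ⟨K, hK, rfl⟩
    have hsmeas : Measurable fun ω => ∑ i, K i * compoundReturn X 1 ω i :=
      Finset.measurable_sum _ fun i _ =>
        measurable_const.mul ((measurable_pi_apply i).comp (hRmeas 1))
    have hsbd : ∀ᵐ ω ∂(ℙ : Measure Ω),
        Finset.univ.inf' hne (fun i => (1 + Xmin i) ^ 1) ≤ ∑ i, K i * compoundReturn X 1 ω i ∧
        ∑ i, K i * compoundReturn X 1 ω i ≤ Finset.univ.sup' hne (fun i => (1 + Xmax i) ^ 1) := by
      filter_upwards [hRbd' 1] with ω hω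
      exact aux_sum_bounds hK (fun i => (hω i).1) (fun i => (hω i).2)
    have h := aux_log_integral_le hsmeas (hLpos 1) hsbd
    simpa [elg] using h
  set g1 := sSup (elg X 1 '' simplex m) with hg1_def
  -- one-step bound
  have hstep1 : ∀ (N : ℕ) (K' : Fin m → ℝ), K' ∈ simplex m →
      ∫ ω, Real.log (∑ i, K' i * (1 + X N ω i)) ∂(ℙ : Measure Ω) ≤ g1 := by
    intro N K' hK'
    have hg : Measurable fun y : Fin m → ℝ => Real.log (∑ i, K' i * (1 + y i)) :=
      Real.measurable_log.comp (Finset.measurable_sum _ fun i _ =>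
        measurable_const.mul (measurable_const.add (measurable_pi_apply i)))
    have h1 : ∫ ω, Real.log (∑ i, K' i * (1 + X N ω i)) ∂(ℙ : Measure Ω)
        = ∫ ω, Real.log (∑ i, K' i * (1 + X 0 ω i)) ∂(ℙ : Measure Ω) :=
      ((hident N).comp hg).integral_eq
    have h2 : ∫ ω, Real.log (∑ i, K' i * (1 + X 0 ω i)) ∂(ℙ : Measure Ω) = elg X 1 K' := by
      simp [elg, compoundReturn, Finset.prod_range_one]
    rw [h1, h2]
    exact le_csSup hBdd ⟨K', hK', rfl⟩
  -- main induction
  have hMain : ∀ N, 1 ≤ N → ∀ K, K ∈ simplex m →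
      ∫ ω, Real.log (∑ i, K i * compoundReturn X N ω i) ∂(ℙ : Measure Ω) ≤ N * g1 := by
    intro N hN
    induction N, hN using Nat.le_induction with
    | base =>
        intro K hK
        have h0 : (fun ω => Real.log (∑ i, K i * compoundReturn X 1 ω i))
            = fun ω => Real.log (∑ i, K i * (1 + X 0 ω i)) := by
          funext ω
          simp [compoundReturn, Finset.prod_range_one]
        rw [h0]
        simpa using hstep1 0 K hK
    | succ N hN IH =>
        intro K hK
        set μ := Measure.map (fun ω => compoundReturn X N ω) (ℙ : Measure Ω) with hμ_def
        set ν := Measure.map (X N) (ℙ : Measure Ω) with hν_def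
        haveI : IsProbabilityMeasure μ := Measure.isProbabilityMeasure_map (hRmeas N).aemeasurable
        haveI : IsProbabilityMeasure ν := Measure.isProbabilityMeasure_map (hmeas N).aemeasurable
        have hπ : Measure.map (fun ω => (compoundReturn X N ω, X N ω)) (ℙ : Measure Ω)
            = μ.prod ν :=
          (indepFun_iff_map_prod_eq_prod_map_map (hRmeas N).aemeasurable
            (hmeas N).aemeasurable).mp (hRindep N hN)
        have hcomp : ∀ ω, Real.log (∑ i, K i * compoundReturn X (N + 1) ω i)
            = auxF K (compoundReturn X N ω, X N ω) := by
          intro ω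
          simp only [auxF, compoundReturn, Finset.prod_range_succ]
        have hintC : Integrable (fun ω => auxF K (compoundReturn X N ω, X N ω)) ℙ := by
          have h := hInt (N + 1) K hK
          simpa only [hcomp] using h
        have hpair : Measurable fun ω => (compoundReturn X N ω, X N ω) :=
          (hRmeas N).prodMk (hmeas N)
        have hfint : Integrable (auxF K) (μ.prod ν) := by
          rw [← hπ]
          exact (integrable_map_measure (auxF_measurable K).aestronglyMeasurable
            hpair.aemeasurable).mpr hintC
        have e1 : ∫ ω, Real.log (∑ i, K i * compoundReturn X (N + 1) ω i) ∂(ℙ : Measure Ω)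
            = ∫ p, auxF K p ∂(μ.prod ν) := by
          rw [← hπ, integral_map hpair.aemeasurable (auxF_measurable K).aestronglyMeasurable]
          exact integral_congr_ae (Eventually.of_forall fun ω => hcomp ω)
        have e2 : ∫ p, auxF K p ∂(μ.prod ν) = ∫ r, ∫ x, auxF K (r, x) ∂ν ∂μ :=
          integral_prod _ hfint
        -- a.e. bounds on the pushforward measures
        have hνbd : ∀ᵐ x ∂ν, ∀ i, Xmin i ≤ x i ∧ x i ≤ Xmax i := by
          have hSx : MeasurableSet {x : Fin m → ℝ | ∀ i, Xmin i ≤ x i ∧ x i ≤ Xmax i} := by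
            rw [Set.setOf_forall]
            refine MeasurableSet.iInter fun i => ?_
            exact (measurableSet_le measurable_const (measurable_pi_apply i)).inter
              (measurableSet_le (measurable_pi_apply i) measurable_const)
          exact (ae_map_iff (hmeas N).aemeasurable hSx).mpr (hbdd N)
        have hμbd : ∀ᵐ r ∂μ, ∀ i,
            Finset.univ.inf' hne (fun i => (1 + Xmin i) ^ N) ≤ r i ∧
            r i ≤ Finset.univ.sup' hne (fun i => (1 + Xmax i) ^ N) := by
          have hSr : MeasurableSet {r : Fin m → ℝ | ∀ i,
              Finset.univ.inf' hne (fun i => (1 + Xmin i) ^ N) ≤ r i ∧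
              r i ≤ Finset.univ.sup' hne (fun i => (1 + Xmax i) ^ N)} := by
            rw [Set.setOf_forall]
            refine MeasurableSet.iInter fun i => ?_
            exact (measurableSet_le measurable_const (measurable_pi_apply i)).inter
              (measurableSet_le (measurable_pi_apply i) measurable_const)
          exact (ae_map_iff (hRmeas N).aemeasurable hSr).mpr (hRbd' N)
        -- the g1 bound for the second marginal
        have hg1ν : ∀ K', K' ∈ simplex m →
            ∫ x, Real.log (∑ i, K' i * (1 + x i)) ∂ν ≤ g1 := by
          intro K' hK'
          have hg : Measurable fun y : Fin m → ℝ => Real.log (∑ i, K' i * (1 + y i)) :=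
            Real.measurable_log.comp (Finset.measurable_sum _ fun i _ =>
              measurable_const.mul (measurable_const.add (measurable_pi_apply i)))
          have heq : ∫ x, Real.log (∑ i, K' i * (1 + x i)) ∂ν
              = ∫ ω, Real.log (∑ i, K' i * (1 + X N ω i)) ∂(ℙ : Measure Ω) := by
            rw [hν_def, integral_map (hmeas N).aemeasurable hg.aestronglyMeasurable]
          rw [heq]
          exact hstep1 N K' hK'
        -- inner bound
        have hinner : ∀ᵐ r ∂μ, ∫ x, auxF K (r, x) ∂ν ≤ Real.log (∑ i, K i * r i) + g1 := by
          filter_upwards [hμbd] with r hr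
          have hrpos : ∀ i, 0 < r i := fun i => (hLpos N).trans_le (hr i).1
          have hνbd' : ∀ᵐ x ∂ν, ∀ i, (1 + Xmin i) ≤ 1 + x i ∧ 1 + x i ≤ 1 + Xmax i := by
            filter_upwards [hνbd] with x hx i
            exact ⟨by linarith [(hx i).1], by linarith [(hx i).2]⟩
          exact aux_inner hK hrpos hc hνbd' hg1ν
        -- outer estimate
        have hlogμ_int : Integrable (fun r => Real.log (∑ i, K i * r i)) μ := by
          have hsmeas : Measurable fun r : Fin m → ℝ => ∑ i, K i * r i :=
            Finset.measurable_sum _ fun i _ => measurable_const.mul (measurable_pi_apply i)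
          refine aux_log_int (U := Finset.univ.sup' hne fun i => (1 + Xmax i) ^ N)
            hsmeas (hLpos N) ?_
          filter_upwards [hμbd] with r hr
          exact aux_sum_bounds hK (fun i => (hr i).1) (fun i => (hr i).2)
        have hout1 : Integrable (fun r => ∫ x, auxF K (r, x) ∂ν) μ := hfint.integral_prod_left
        have hout2 : Integrable (fun r => Real.log (∑ i, K i * r i) + g1) μ :=
          hlogμ_int.add (integrable_const g1)
        have e3 : ∫ r, ∫ x, auxF K (r, x) ∂ν ∂μ
            ≤ ∫ r, (Real.log (∑ i, K i * r i) + g1) ∂μ :=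
          integral_mono_ae hout1 hout2 hinner
        have e4 : ∫ r, (Real.log (∑ i, K i * r i) + g1) ∂μ
            = ∫ ω, Real.log (∑ i, K i * compoundReturn X N ω i) ∂(ℙ : Measure Ω) + g1 := by
          rw [integral_add hlogμ_int (integrable_const g1), integral_const]
          have hg : Measurable fun r : Fin m → ℝ => Real.log (∑ i, K i * r i) :=
            Real.measurable_log.comp (Finset.measurable_sum _ fun i _ =>
              measurable_const.mul (measurable_pi_apply i))
          rw [hμ_def, integral_map (hRmeas N).aemeasurable hg.aestronglyMeasurable]
          simp
        have hfinal := IH K hK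
        rw [e1, e2]
        calc ∫ r, ∫ x, auxF K (r, x) ∂ν ∂μ
            ≤ ∫ ω, Real.log (∑ i, K i * compoundReturn X N ω i) ∂(ℙ : Measure Ω) + g1 := by
              rw [← e4]; exact e3
          _ ≤ N * g1 + g1 := by linarith
          _ = (↑(N + 1) : ℝ) * g1 := by push_cast; ring
  -- conclude
  refine csSup_le ⟨elg X n (fun _ => (m : ℝ)⁻¹), Set.mem_image_of_mem _ hK0⟩ ?_
  rintro y ⟨K, hK, rfl⟩
  have h := hMain n hn K hK
  have hn0 : (0 : ℝ) < n := by exact_mod_cast Nat.lt_of_lt_of_le Nat.zero_lt_one hn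
  have hle : elg X n K ≤ (n : ℝ)⁻¹ * ((n : ℝ) * g1) := by
    rw [elg]
    exact mul_le_mul_of_nonneg_left h (inv_nonneg.mpr hn0.le)
  calc elg X n K ≤ (n : ℝ)⁻¹ * ((n : ℝ) * g1) := hle
    _ = g1 := by field_simp
end

section
/- Assume that for every n ≥ 1 the compound return vector R_n and the next one-period return vector X(n) are independent. Then for every integer n > 1 the optimal expected log-growth values satisfy the recursion g_n* ≤ ((n−1)/n)·g_{n−1}* + (1/n)·g_1*. -/
open MeasureTheory ProbabilityTheory Filter Topology Finset Real

lemma simplex_sum_bounds {m : ℕ} {K r : Fin m → ℝ} (hK : K ∈ simplex m)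
    {A B : ℝ} (hr : ∀ i, A ≤ r i ∧ r i ≤ B) :
    A ≤ (∑ i, K i * r i) ∧ (∑ i, K i * r i) ≤ B := by
  obtain ⟨hK0, hK1⟩ := hK
  constructor
  · calc A = ∑ i, K i * A := by rw [← Finset.sum_mul, hK1, one_mul]
    _ ≤ ∑ i, K i * r i :=
      Finset.sum_le_sum fun i _ => mul_le_mul_of_nonneg_left (hr i).1 (hK0 i)
  · calc (∑ i, K i * r i) ≤ ∑ i, K i * B :=
      Finset.sum_le_sum fun i _ => mul_le_mul_of_nonneg_left (hr i).2 (hK0 i)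
    _ = B := by rw [← Finset.sum_mul, hK1, one_mul]
lemma compound_bounds {Ω : Type*} {m : ℕ} {X : ℕ → Ω → Fin m → ℝ} {ω : Ω}
    {A B : ℝ} (hA : 0 ≤ A) (h : ∀ k i, A ≤ 1 + X k ω i ∧ 1 + X k ω i ≤ B)
    (j : ℕ) (i : Fin m) :
    A ^ j ≤ compoundReturn X j ω i ∧ compoundReturn X j ω i ≤ B ^ j := by
  constructor
  · rw [show A ^ j = ∏ k ∈ Finset.range j, A by simp]
    exact Finset.prod_le_prod (fun k _ => hA) fun k _ => (h k i).1
  · rw [show B ^ j = ∏ k ∈ Finset.range j, B by simp]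
    exact Finset.prod_le_prod (fun k _ => le_trans hA (h k i).1) fun k _ => (h k i).2
lemma measurable_compound {Ω : Type*} [MeasurableSpace Ω] {m : ℕ}
    {X : ℕ → Ω → Fin m → ℝ} (hmeas : ∀ k, Measurable (X k)) (j : ℕ) :
    Measurable (fun ω => compoundReturn X j ω) := by
  rw [measurable_pi_iff]
  intro i
  exact Finset.measurable_prod _ fun k _ =>
    measurable_const.add ((measurable_pi_apply i).comp (hmeas k))
lemma abs_log_bound {A B y : ℝ} {j n : ℕ} (hA0 : 0 < A) (hA1 : A ≤ 1) (hB1 : 1 ≤ B)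
    (hjn : j ≤ n) (h1 : A ^ j ≤ y) (h2 : y ≤ B ^ j) :
    |Real.log y| ≤ n * (Real.log B - Real.log A) := by
  have hy : 0 < y := lt_of_lt_of_le (pow_pos hA0 j) h1
  have hlA : Real.log A ≤ 0 := Real.log_nonpos hA0.le hA1
  have hlB : 0 ≤ Real.log B := Real.log_nonneg hB1
  rw [abs_le]
  constructor
  · have : (j : ℝ) * Real.log A ≤ Real.log y := by
      rw [← Real.log_pow]; exact Real.log_le_log (pow_pos hA0 j) h1
    nlinarith [(Nat.cast_le (α := ℝ)).2 hjn]
  · have : Real.log y ≤ (j : ℝ) * Real.log B := by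
      rw [← Real.log_pow]; exact Real.log_le_log hy h2
    nlinarith [(Nat.cast_le (α := ℝ)).2 hjn]

/-- The recursion for the optimal ELG values: under the independence hypothesis on `R_n` and
`X(n)`, one has `g_n^* ≤ ((n-1)/n) g_{n-1}^* + (1/n) g_1^*` for every `n > 1`. -/
theorem elg_opt_recursion
    {Ω : Type*} [MeasureSpace Ω] [IsProbabilityMeasure (ℙ : Measure Ω)]
    {m : ℕ} (hm : 2 ≤ m)
    (X : ℕ → Ω → Fin m → ℝ)
    (hmeas : ∀ k, Measurable (X k))
    (hiid : iIndepFun X ℙ)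
    (hident : ∀ k, IdentDistrib (X k) (X 0) ℙ ℙ)
    (Xmin Xmax : Fin m → ℝ)
    (hXmin : ∀ i, -1 < Xmin i)
    (hbdd : ∀ k, ∀ᵐ ω ∂(ℙ : Measure Ω), ∀ i, Xmin i ≤ X k ω i ∧ X k ω i ≤ Xmax i)
    (hRindep : ∀ n : ℕ, 1 ≤ n →
      IndepFun (fun ω => compoundReturn X n ω) (X n) ℙ) :
    ∀ n : ℕ, 1 < n →
      sSup (elg X n '' simplex m) ≤
        (((n : ℝ) - 1) / n) * sSup (elg X (n - 1) '' simplex m) +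
          (n : ℝ)⁻¹ * sSup (elg X 1 '' simplex m) := by
  intro n hn
  have hmpos : 0 < m := by omega
  haveI : Nonempty (Fin m) := ⟨⟨0, hmpos⟩⟩
  -- bounds A, B
  set A : ℝ := (Finset.univ.inf' Finset.univ_nonempty fun i => 1 + Xmin i) ⊓ 1 with hAdef
  set B : ℝ := (Finset.univ.sup' Finset.univ_nonempty fun i => 1 + Xmax i) ⊔ 1 with hBdef
  have hAx : ∀ i, A ≤ 1 + Xmin i := fun i =>
    le_trans inf_le_left (Finset.inf'_le _ (Finset.mem_univ i))
  have hBx : ∀ i, 1 + Xmax i ≤ B := fun i =>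
    le_trans (Finset.le_sup' (fun i => 1 + Xmax i) (Finset.mem_univ i)) le_sup_left
  have hA0 : 0 < A := by
    rw [hAdef]
    apply lt_inf_iff.2
    refine ⟨?_, one_pos⟩
    apply (Finset.lt_inf'_iff _).2
    intro i _
    linarith [hXmin i]
  have hA1 : A ≤ 1 := inf_le_right
  have hB1 : 1 ≤ B := le_sup_right
  -- good event
  have hG : ∀ᵐ ω ∂(ℙ : Measure Ω), ∀ k i, A ≤ 1 + X k ω i ∧ 1 + X k ω i ≤ B := by
    rw [ae_all_iff]
    intro k
    filter_upwards [hbdd k] with ω hω i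
    exact ⟨le_trans (hAx i) (by linarith [(hω i).1]),
      le_trans (by linarith [(hω i).2]) (hBx i)⟩
  set M : ℝ := n * (Real.log B - Real.log A) with hMdef
  -- key integrability and bounds
  have key : ∀ j : ℕ, j ≤ n → ∀ K ∈ simplex m,
      Integrable (fun ω => Real.log (∑ i, K i * compoundReturn X j ω i)) ℙ ∧
      (∫ ω, Real.log (∑ i, K i * compoundReturn X j ω i)) ≤ j * Real.log B := by
    intro j hj K hK
    have hmf : Measurable (fun ω => Real.log (∑ i, K i * compoundReturn X j ω i)) := by
      apply Real.measurable_log.comp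
      exact Finset.measurable_sum _ fun i _ =>
        measurable_const.mul ((measurable_pi_apply i).comp (measurable_compound hmeas j))
    have hbound : ∀ᵐ ω ∂(ℙ : Measure Ω),
        A ^ j ≤ (∑ i, K i * compoundReturn X j ω i) ∧
        (∑ i, K i * compoundReturn X j ω i) ≤ B ^ j := by
      filter_upwards [hG] with ω hω
      exact simplex_sum_bounds hK (compound_bounds hA0.le hω j)
    have hint : Integrable (fun ω => Real.log (∑ i, K i * compoundReturn X j ω i)) ℙ := by
      apply Integrable.mono' (integrable_const M) hmf.aestronglyMeasurable
      filter_upwards [hbound] with ω hω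
      exact abs_log_bound hA0 hA1 hB1 hj hω.1 hω.2
    refine ⟨hint, ?_⟩
    calc (∫ ω, Real.log (∑ i, K i * compoundReturn X j ω i))
        ≤ ∫ _ω, (j : ℝ) * Real.log B := by
          apply integral_mono_ae hint (integrable_const _)
          filter_upwards [hbound] with ω hω
          calc Real.log (∑ i, K i * compoundReturn X j ω i) ≤ Real.log (B ^ j) :=
            Real.log_le_log (lt_of_lt_of_le (pow_pos hA0 j) hω.1) hω.2
          _ = j * Real.log B := by rw [Real.log_pow]
      _ = j * Real.log B := by simp
  -- bddAbove and the generic sSup upper bound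
  have elg_le : ∀ j : ℕ, 1 ≤ j → j ≤ n → ∀ K ∈ simplex m, elg X j K ≤ Real.log B := by
    intro j hj1 hjn K hK
    have h := (key j hjn K hK).2
    have hj0 : (0:ℝ) < j := by exact_mod_cast hj1
    rw [elg]
    calc (j : ℝ)⁻¹ * ∫ ω, Real.log (∑ i, K i * compoundReturn X j ω i)
        ≤ (j : ℝ)⁻¹ * (j * Real.log B) :=
          mul_le_mul_of_nonneg_left h (by positivity)
      _ = Real.log B := by field_simp
  have bddj : ∀ j : ℕ, 1 ≤ j → j ≤ n → BddAbove (elg X j '' simplex m) := by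
    intro j hj1 hjn
    refine ⟨Real.log B, ?_⟩
    rintro x ⟨K, hK, rfl⟩
    exact elg_le j hj1 hjn K hK
  -- simplex nonempty
  have hKne : (simplex m).Nonempty := by
    refine ⟨fun _ => (m : ℝ)⁻¹, fun i => by positivity, ?_⟩
    simp [Finset.sum_const, Finset.card_univ]
    field_simp
  -- main bound for each K
  have main : ∀ K ∈ simplex m, elg X n K ≤
      (((n : ℝ) - 1) / n) * sSup (elg X (n - 1) '' simplex m) +
        (n : ℝ)⁻¹ * sSup (elg X 1 '' simplex m) := by
    intro K hK
    set R : Ω → Fin m → ℝ := fun ω => compoundReturn X (n-1) ω with hRdef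
    set Y : Ω → Fin m → ℝ := X (n-1) with hYdef
    have hRm : Measurable R := measurable_compound hmeas (n-1)
    have hYm : Measurable Y := hmeas (n-1)
    set F : (Fin m → ℝ) × (Fin m → ℝ) → ℝ := fun p =>
      Real.log (∑ i, K i * p.1 i * (1 + p.2 i)) - Real.log (∑ i, K i * p.1 i) with hFdef
    have hFm : Measurable F := by
      apply Measurable.sub
      · apply Real.measurable_log.comp
        exact Finset.measurable_sum _ fun i _ =>
          (measurable_const.mul ((measurable_pi_apply i).comp measurable_fst)).mul
            (measurable_const.add ((measurable_pi_apply i).comp measurable_snd))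
      · apply Real.measurable_log.comp
        exact Finset.measurable_sum _ fun i _ =>
          measurable_const.mul ((measurable_pi_apply i).comp measurable_fst)
    -- decomposition identity (pointwise, everywhere)
    have hnn : n - 1 + 1 = n := by omega
    have hdecomp : ∀ ω, Real.log (∑ i, K i * compoundReturn X n ω i) =
        F (R ω, Y ω) + Real.log (∑ i, K i * compoundReturn X (n-1) ω i) := by
      intro ω
      have hsucc : ∀ i, compoundReturn X n ω i = R ω i * (1 + Y ω i) := by
        intro i
        rw [← hnn, compoundReturn, Finset.prod_range_succ]
        rfl
      have hsum : (∑ i, K i * compoundReturn X n ω i)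
          = ∑ i, K i * R ω i * (1 + Y ω i) :=
        Finset.sum_congr rfl fun i _ => by rw [hsucc i, mul_assoc]
      have hFval : F (R ω, Y ω) =
          Real.log (∑ i, K i * R ω i * (1 + Y ω i)) -
            Real.log (∑ i, K i * R ω i) := by rw [hFdef]
      rw [hsum, hFval]
      have : (∑ i, K i * compoundReturn X (n-1) ω i) = ∑ i, K i * R ω i := rfl
      rw [this]; ring
    -- integrability pieces
    have hint_n := (key n le_rfl K hK).1
    have hint_n1 := (key (n-1) (by omega) K hK).1
    have hFRY : Integrable (fun ω => F (R ω, Y ω)) ℙ := by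
      have heq : (fun ω => F (R ω, Y ω)) = fun ω =>
          Real.log (∑ i, K i * compoundReturn X n ω i) -
            Real.log (∑ i, K i * compoundReturn X (n-1) ω i) := by
        funext ω; rw [hdecomp ω]; ring
      rw [heq]; exact hint_n.sub hint_n1
    have hsplit : (∫ ω, Real.log (∑ i, K i * compoundReturn X n ω i)) =
        (∫ ω, F (R ω, Y ω)) +
          ∫ ω, Real.log (∑ i, K i * compoundReturn X (n-1) ω i) := by
      rw [← integral_add hFRY hint_n1]
      exact integral_congr_ae (Filter.Eventually.of_forall fun ω => hdecomp ω)
    -- product measure structure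
    set μ := (ℙ : Measure Ω).map R with hμdef
    set ν := (ℙ : Measure Ω).map Y with hνdef
    haveI : IsProbabilityMeasure μ := Measure.isProbabilityMeasure_map hRm.aemeasurable
    haveI : IsProbabilityMeasure ν := Measure.isProbabilityMeasure_map hYm.aemeasurable
    have hn1 : 1 ≤ n - 1 := by omega
    have hRYm : Measurable fun ω => (R ω, Y ω) := hRm.prodMk hYm
    have hprod : (ℙ : Measure Ω).map (fun ω => (R ω, Y ω)) = μ.prod ν :=
      (indepFun_iff_map_prod_eq_prod_map_map hRm.aemeasurable hYm.aemeasurable).1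
        (hRindep (n-1) hn1)
    have hFint : Integrable F (μ.prod ν) := by
      rw [← hprod, integrable_map_measure hFm.aestronglyMeasurable hRYm.aemeasurable]
      exact hFRY
    have hFeq : (∫ ω, F (R ω, Y ω)) = ∫ r, (∫ x, F (r, x) ∂ν) ∂μ :=
      calc (∫ ω, F (R ω, Y ω))
          = ∫ p, F p ∂((ℙ : Measure Ω).map fun ω => (R ω, Y ω)) :=
            (integral_map hRYm.aemeasurable hFm.aestronglyMeasurable).symm
        _ = ∫ p, F p ∂(μ.prod ν) := by rw [hprod]
        _ = ∫ r, (∫ x, F (r, x) ∂ν) ∂μ := integral_prod F hFint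
    -- a.e. boxes under the mapped measures
    have hsetX : MeasurableSet {x : Fin m → ℝ | ∀ i, A ≤ 1 + x i ∧ 1 + x i ≤ B} := by
      rw [Set.setOf_forall]
      refine MeasurableSet.iInter fun i => ?_
      rw [Set.setOf_and]
      exact (measurableSet_le measurable_const
          (measurable_const.add (measurable_pi_apply i))).inter
        (measurableSet_le (measurable_const.add (measurable_pi_apply i)) measurable_const)
    have hνbox : ∀ᵐ x ∂ν, ∀ i, A ≤ 1 + x i ∧ 1 + x i ≤ B := by
      rw [hνdef, ae_map_iff hYm.aemeasurable hsetX]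
      filter_upwards [hG] with ω hω i
      exact hω (n-1) i
    have hsetR : MeasurableSet
        {r : Fin m → ℝ | ∀ i, A ^ (n-1) ≤ r i ∧ r i ≤ B ^ (n-1)} := by
      rw [Set.setOf_forall]
      refine MeasurableSet.iInter fun i => ?_
      rw [Set.setOf_and]
      exact (measurableSet_le measurable_const (measurable_pi_apply i)).inter
        (measurableSet_le (measurable_pi_apply i) measurable_const)
    have hμbox : ∀ᵐ r ∂μ, ∀ i, A ^ (n-1) ≤ r i ∧ r i ≤ B ^ (n-1) := by
      rw [hμdef, ae_map_iff hRm.aemeasurable hsetR]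
      filter_upwards [hG] with ω hω i
      exact compound_bounds hA0.le hω (n-1) i
    -- inner integral bound
    have hinner : ∀ᵐ r ∂μ, (∫ x, F (r, x) ∂ν) ≤ sSup (elg X 1 '' simplex m) := by
      filter_upwards [hμbox] with r hr
      have hS : A ^ (n-1) ≤ (∑ i, K i * r i) ∧ (∑ i, K i * r i) ≤ B ^ (n-1) :=
        simplex_sum_bounds hK hr
      have hSpos : 0 < ∑ i, K i * r i := lt_of_lt_of_le (pow_pos hA0 _) hS.1
      set w : Fin m → ℝ := fun i => K i * r i / (∑ j, K j * r j) with hwdef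
      have hw : w ∈ simplex m := by
        constructor
        · intro i
          have hri : 0 ≤ r i := le_trans (pow_pos hA0 _).le (hr i).1
          exact div_nonneg (mul_nonneg (hK.1 i) hri) hSpos.le
        · rw [hwdef, ← Finset.sum_div]
          exact div_self hSpos.ne'
      have hFx : ∀ᵐ x ∂ν, F (r, x) = Real.log (∑ i, w i * (1 + x i)) := by
        filter_upwards [hνbox] with x hx
        have hTA : A ≤ ∑ i, w i * (1 + x i) := (simplex_sum_bounds hw hx).1
        have hTpos : 0 < ∑ i, w i * (1 + x i) := lt_of_lt_of_le hA0 hTA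
        have hsum : (∑ i, K i * r i * (1 + x i))
            = (∑ j, K j * r j) * ∑ i, w i * (1 + x i) := by
          rw [Finset.mul_sum]
          refine Finset.sum_congr rfl fun i _ => ?_
          rw [hwdef]
          field_simp
        have hFval : F (r, x) =
            Real.log (∑ i, K i * r i * (1 + x i)) -
              Real.log (∑ i, K i * r i) := by rw [hFdef]
        rw [hFval, hsum, Real.log_mul hSpos.ne' hTpos.ne']
        ring
      rw [integral_congr_ae hFx]
      have hg : Measurable fun x : Fin m → ℝ => Real.log (∑ i, w i * (1 + x i)) := by
        apply Real.measurable_log.comp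
        exact Finset.measurable_sum _ fun i _ =>
          measurable_const.mul (measurable_const.add (measurable_pi_apply i))
      have h1 : (∫ x, Real.log (∑ i, w i * (1 + x i)) ∂ν) = elg X 1 w := by
        rw [hνdef, integral_map hYm.aemeasurable hg.aestronglyMeasurable]
        have hid : IdentDistrib (fun ω => Real.log (∑ i, w i * (1 + X (n-1) ω i)))
            (fun ω => Real.log (∑ i, w i * (1 + X 0 ω i))) ℙ ℙ :=
          (hident (n-1)).comp hg
        have hcomp : ∀ ω i, compoundReturn X 1 ω i = 1 + X 0 ω i := by
          intro ω i; rw [compoundReturn, Finset.prod_range_one]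
        rw [show (fun ω => Real.log (∑ i, w i * (1 + Y ω i)))
            = fun ω => Real.log (∑ i, w i * (1 + X (n-1) ω i)) from rfl]
        rw [hid.integral_eq, elg]
        simp only [Nat.cast_one, inv_one, one_mul, hcomp]
      rw [h1]
      exact le_csSup (bddj 1 le_rfl (by omega)) ⟨w, hw, rfl⟩
    -- combine
    have hFle : (∫ ω, F (R ω, Y ω)) ≤ sSup (elg X 1 '' simplex m) := by
      rw [hFeq]
      calc (∫ r, (∫ x, F (r, x) ∂ν) ∂μ)
          ≤ ∫ _r, sSup (elg X 1 '' simplex m) ∂μ :=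
            integral_mono_ae hFint.integral_prod_left (integrable_const _) hinner
        _ = sSup (elg X 1 '' simplex m) := by simp
    have hcast : ((n - 1 : ℕ) : ℝ) = (n : ℝ) - 1 := by
      rw [Nat.cast_sub (by omega)]; simp
    have hpos : (0:ℝ) < (n:ℝ) - 1 := by
      have : (1:ℝ) < n := by exact_mod_cast hn
      linarith
    have hRle : (∫ ω, Real.log (∑ i, K i * compoundReturn X (n-1) ω i))
        ≤ ((n:ℝ) - 1) * sSup (elg X (n-1) '' simplex m) := by
      have hle : elg X (n-1) K ≤ sSup (elg X (n-1) '' simplex m) :=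
        le_csSup (bddj (n-1) hn1 (by omega)) ⟨K, hK, rfl⟩
      have heq : (∫ ω, Real.log (∑ i, K i * compoundReturn X (n-1) ω i))
          = ((n:ℝ) - 1) * elg X (n-1) K := by
        rw [elg, hcast, ← mul_assoc, mul_inv_cancel₀ hpos.ne', one_mul]
      rw [heq]
      exact mul_le_mul_of_nonneg_left hle hpos.le
    have hnpos : (0:ℝ) < n := by
      have : (1:ℝ) < n := by exact_mod_cast hn
      linarith
    rw [elg, hsplit]
    calc (n:ℝ)⁻¹ * ((∫ ω, F (R ω, Y ω)) +
          ∫ ω, Real.log (∑ i, K i * compoundReturn X (n-1) ω i))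
        ≤ (n:ℝ)⁻¹ * (sSup (elg X 1 '' simplex m) +
            ((n:ℝ) - 1) * sSup (elg X (n-1) '' simplex m)) :=
          mul_le_mul_of_nonneg_left (add_le_add hFle hRle) (by positivity)
      _ = (((n:ℝ) - 1) / n) * sSup (elg X (n-1) '' simplex m) +
            (n:ℝ)⁻¹ * sSup (elg X 1 '' simplex m) := by
          field_simp
          ring
  -- conclude via csSup_le
  apply csSup_le (hKne.image _)
  rintro x ⟨K, hK, rfl⟩
  exact main K hK
end

section
/- Suppose asset j is dominant and let K ∈ 𝒦 with K_j > 0. Then for every n ≥ 1 the optimality gap satisfies the sharpened upper bound g_1* − g_n(K) ≤ (1/n)·( log(1/K_j) − 1 + K_j·E[ R_{n,j} / (Kᵀ R_n) ] ), where g_1* = E[log(1 + X_j(0))]. -/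
open MeasureTheory ProbabilityTheory Filter Topology Finset Real

/-- **Sharpened upper bound** on the optimality gap: if asset `j` is dominant and `K_j > 0`,
then `g_1^* - g_n(K) ≤ (1/n)(log(1/K_j) - 1 + K_j · E[R_{n,j}/(Kᵀ R_n)])`. -/
theorem buy_and_hold_gap_sharp_upper_bound
    {Ω : Type*} [MeasureSpace Ω] [IsProbabilityMeasure (ℙ : Measure Ω)]
    {m : ℕ} (hm : 2 ≤ m)
    (X : ℕ → Ω → Fin m → ℝ)
    (hmeas : ∀ k, Measurable (X k))
    (hiid : iIndepFun X ℙ)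
    (hident : ∀ k, IdentDistrib (X k) (X 0) ℙ ℙ)
    (Xmin Xmax : Fin m → ℝ)
    (hXmin : ∀ i, -1 < Xmin i)
    (hbdd : ∀ k, ∀ᵐ ω ∂(ℙ : Measure Ω), ∀ i, Xmin i ≤ X k ω i ∧ X k ω i ≤ Xmax i)
    (j : Fin m)
    (hdom : ∀ i, i ≠ j → ∫ ω, (1 + X 0 ω i) / (1 + X 0 ω j) ≤ 1)
    (K : Fin m → ℝ) (hK : K ∈ simplex m) (hKj : 0 < K j) :
    ∀ n : ℕ, 1 ≤ n →
      (∫ ω, Real.log (1 + X 0 ω j)) - elg X n K ≤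
        (n : ℝ)⁻¹ * (Real.log (1 / K j) - 1 +
          K j * ∫ ω, compoundReturn X n ω j / ∑ i, K i * compoundReturn X n ω i) := by
  intro n hn
  obtain ⟨hK0, hK1⟩ := hK
  have hnpos : (0:ℝ) < n := by exact_mod_cast hn
  have hXmeas : ∀ k i, Measurable fun ω => X k ω i :=
    fun k i => (measurable_pi_apply i).comp (hmeas k)
  have hRmeas : ∀ i, Measurable fun ω => compoundReturn X n ω i := fun i => by
    unfold compoundReturn
    exact Finset.measurable_prod _ fun k _ => measurable_const.add (hXmeas k i)
  set S : Ω → ℝ := fun ω => ∑ i, K i * compoundReturn X n ω i with hSdef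
  have hSmeas : Measurable S :=
    Finset.measurable_sum _ fun i _ => measurable_const.mul (hRmeas i)
  have hminpos : ∀ i, (0:ℝ) < 1 + Xmin i := fun i => by linarith [hXmin i]
  have hmaxmin : ∀ i, Xmin i ≤ Xmax i := by
    obtain ⟨ω, hω⟩ := (hbdd 0).exists
    exact fun i => le_trans (hω i).1 (hω i).2
  have hmaxpos : ∀ i, (0:ℝ) < 1 + Xmax i := fun i => lt_of_lt_of_le (hminpos i)
    (by linarith [hmaxmin i])
  have hbdd' : ∀ᵐ ω ∂(ℙ : Measure Ω), ∀ k, ∀ i, Xmin i ≤ X k ω i ∧ X k ω i ≤ Xmax i :=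
    (ae_all_iff).mpr hbdd
  -- pointwise bounds on the good event
  have hRpos : ∀ᵐ ω ∂(ℙ : Measure Ω), ∀ i, 0 < compoundReturn X n ω i := by
    filter_upwards [hbdd'] with ω hω i
    exact Finset.prod_pos fun k _ => lt_of_lt_of_le (hminpos i) (by linarith [(hω k i).1])
  have hRle : ∀ᵐ ω ∂(ℙ : Measure Ω), ∀ i, compoundReturn X n ω i ≤ (1 + Xmax i) ^ n := by
    filter_upwards [hbdd'] with ω hω i
    calc compoundReturn X n ω i ≤ ∏ _k ∈ Finset.range n, (1 + Xmax i) :=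
          Finset.prod_le_prod (fun k _ => le_of_lt (lt_of_lt_of_le (hminpos i)
            (by linarith [(hω k i).1]))) (fun k _ => by linarith [(hω k i).2])
      _ = (1 + Xmax i) ^ n := by rw [Finset.prod_const, Finset.card_range]
  have hRge : ∀ᵐ ω ∂(ℙ : Measure Ω), (1 + Xmin j) ^ n ≤ compoundReturn X n ω j := by
    filter_upwards [hbdd'] with ω hω
    calc (1 + Xmin j) ^ n = ∏ _k ∈ Finset.range n, (1 + Xmin j) := by
          rw [Finset.prod_const, Finset.card_range]
      _ ≤ compoundReturn X n ω j :=
          Finset.prod_le_prod (fun k _ => le_of_lt (hminpos j))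
            (fun k _ => by linarith [(hω k j).1])
  have hSgej : ∀ᵐ ω ∂(ℙ : Measure Ω), K j * compoundReturn X n ω j ≤ S ω := by
    filter_upwards [hRpos] with ω hω
    exact Finset.single_le_sum (f := fun i => K i * compoundReturn X n ω i)
      (fun i _ => mul_nonneg (hK0 i) (le_of_lt (hω i))) (Finset.mem_univ j)
  have hSpos : ∀ᵐ ω ∂(ℙ : Measure Ω), 0 < S ω := by
    filter_upwards [hRpos, hSgej] with ω hω hω2
    exact lt_of_lt_of_le (mul_pos hKj (hω j)) hω2
  have hSge : ∀ᵐ ω ∂(ℙ : Measure Ω), K j * (1 + Xmin j) ^ n ≤ S ω := by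
    filter_upwards [hRge, hSgej] with ω h1 h2
    exact le_trans (by nlinarith [hKj]) h2
  have hSle : ∀ᵐ ω ∂(ℙ : Measure Ω), S ω ≤ ∑ i, K i * (1 + Xmax i) ^ n := by
    filter_upwards [hRle] with ω hω
    exact Finset.sum_le_sum fun i _ => mul_le_mul_of_nonneg_left (hω i) (hK0 i)
  -- integrability of log(1 + X k ω j)
  have hintX : ∀ k, Integrable (fun ω => Real.log (1 + X k ω j)) (ℙ : Measure Ω) := by
    intro k
    refine Integrable.mono' (integrable_const
      (max |Real.log (1 + Xmin j)| |Real.log (1 + Xmax j)|))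
      ((Real.measurable_log.comp (measurable_const.add (hXmeas k j))).aestronglyMeasurable) ?_
    filter_upwards [hbdd k] with ω hω
    have h1 : Real.log (1 + Xmin j) ≤ Real.log (1 + X k ω j) :=
      Real.log_le_log (hminpos j) (by linarith [(hω j).1])
    have h2 : Real.log (1 + X k ω j) ≤ Real.log (1 + Xmax j) :=
      Real.log_le_log (lt_of_lt_of_le (hminpos j) (by linarith [(hω j).1]))
        (by linarith [(hω j).2])
    rw [Real.norm_eq_abs, abs_le]
    constructor
    · exact le_trans (neg_le_neg (le_max_left _ _)) (le_trans (neg_abs_le _) h1)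
    · exact le_trans h2 (le_trans (le_abs_self _) (le_max_right _ _))
  -- integrability of log S
  have hintlogS : Integrable (fun ω => Real.log (S ω)) (ℙ : Measure Ω) := by
    refine Integrable.mono' (integrable_const
      (max |Real.log (K j * (1 + Xmin j) ^ n)| |Real.log (∑ i, K i * (1 + Xmax i) ^ n)|))
      ((Real.measurable_log.comp hSmeas).aestronglyMeasurable) ?_
    filter_upwards [hSge, hSle, hSpos] with ω h1 h2 h3
    have hc : (0:ℝ) < K j * (1 + Xmin j) ^ n := mul_pos hKj (pow_pos (hminpos j) n)
    have l1 : Real.log (K j * (1 + Xmin j) ^ n) ≤ Real.log (S ω) := Real.log_le_log hc h1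
    have l2 : Real.log (S ω) ≤ Real.log (∑ i, K i * (1 + Xmax i) ^ n) :=
      Real.log_le_log h3 h2
    rw [Real.norm_eq_abs, abs_le]
    constructor
    · exact le_trans (neg_le_neg (le_max_left _ _)) (le_trans (neg_abs_le _) l1)
    · exact le_trans l2 (le_trans (le_abs_self _) (le_max_right _ _))
  -- integrability of the ratio
  have hintratio : Integrable (fun ω => compoundReturn X n ω j / S ω) (ℙ : Measure Ω) := by
    refine Integrable.mono' (integrable_const ((K j)⁻¹))
      (((hRmeas j).div hSmeas).aestronglyMeasurable) ?_
    filter_upwards [hRpos, hSpos, hSgej] with ω h1 h2 h3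
    rw [Real.norm_eq_abs, abs_of_nonneg (div_nonneg (le_of_lt (h1 j)) (le_of_lt h2))]
    rw [div_le_iff₀ h2]
    calc compoundReturn X n ω j = (K j)⁻¹ * (K j * compoundReturn X n ω j) := by
          field_simp
      _ ≤ (K j)⁻¹ * S ω := by
          exact mul_le_mul_of_nonneg_left h3 (le_of_lt (inv_pos.mpr hKj))
  -- log R_j as a sum
  have hlogprod : (fun ω => Real.log (compoundReturn X n ω j)) =ᵐ[(ℙ : Measure Ω)]
      fun ω => ∑ k ∈ Finset.range n, Real.log (1 + X k ω j) := by
    filter_upwards [hbdd'] with ω hω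
    unfold compoundReturn
    exact Real.log_prod fun k _ =>
      ne_of_gt (lt_of_lt_of_le (hminpos j) (by linarith [(hω k j).1]))
  have hintlogR : Integrable (fun ω => Real.log (compoundReturn X n ω j)) (ℙ : Measure Ω) :=
    (integrable_finset_sum (Finset.range n) (fun k _ => hintX k)).congr hlogprod.symm
  -- identical distribution: each term has the same integral
  have hident' : ∀ k, ∫ ω, Real.log (1 + X k ω j) = ∫ ω, Real.log (1 + X 0 ω j) := by
    intro k
    have hg : Measurable fun v : Fin m → ℝ => Real.log (1 + v j) :=
      Real.measurable_log.comp (measurable_const.add (measurable_pi_apply j))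
    exact ((hident k).comp hg).integral_eq
  have hlogRint : ∫ ω, Real.log (compoundReturn X n ω j) =
      (n : ℝ) * ∫ ω, Real.log (1 + X 0 ω j) := by
    rw [integral_congr_ae hlogprod, integral_finset_sum _ (fun k _ => hintX k)]
    simp only [hident']
    rw [Finset.sum_const, Finset.card_range, nsmul_eq_mul]
  -- the pointwise inequality
  have hpt : ∀ᵐ ω ∂(ℙ : Measure Ω),
      Real.log (compoundReturn X n ω j) - Real.log (S ω) ≤
      (Real.log (1 / K j) - 1) + K j * (compoundReturn X n ω j / S ω) := by
    filter_upwards [hRpos, hSpos] with ω h1 h2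
    have hx : (0:ℝ) < K j * (compoundReturn X n ω j / S ω) :=
      mul_pos hKj (div_pos (h1 j) h2)
    have hlog := Real.log_le_sub_one_of_pos hx
    have heq : Real.log (K j * (compoundReturn X n ω j / S ω)) =
        Real.log (K j) + (Real.log (compoundReturn X n ω j) - Real.log (S ω)) := by
      rw [Real.log_mul (ne_of_gt hKj) (ne_of_gt (div_pos (h1 j) h2)),
        Real.log_div (ne_of_gt (h1 j)) (ne_of_gt h2)]
    rw [heq] at hlog
    rw [Real.log_div one_ne_zero (ne_of_gt hKj), Real.log_one]
    linarith
  -- integrate the inequality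
  have key : (∫ ω, Real.log (compoundReturn X n ω j)) - ∫ ω, Real.log (S ω) ≤
      Real.log (1 / K j) - 1 + K j * ∫ ω, compoundReturn X n ω j / S ω := by
    rw [← integral_sub hintlogR hintlogS]
    calc ∫ ω, (Real.log (compoundReturn X n ω j) - Real.log (S ω)) ≤
        ∫ ω, ((Real.log (1 / K j) - 1) + K j * (compoundReturn X n ω j / S ω)) :=
          integral_mono_ae (hintlogR.sub hintlogS)
            ((integrable_const _).add (hintratio.const_mul _)) hpt
      _ = Real.log (1 / K j) - 1 + K j * ∫ ω, compoundReturn X n ω j / S ω := by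
          rw [integral_add (integrable_const _) (hintratio.const_mul _),
            integral_const, integral_const_mul]
          simp
  -- conclude
  unfold elg
  have hfinal : (∫ ω, Real.log (1 + X 0 ω j)) -
      (n : ℝ)⁻¹ * ∫ ω, Real.log (S ω) =
      (n : ℝ)⁻¹ * ((∫ ω, Real.log (compoundReturn X n ω j)) - ∫ ω, Real.log (S ω)) := by
    rw [hlogRint]
    field_simp
  rw [show (fun ω => Real.log (∑ i, K i * compoundReturn X n ω i)) =
      fun ω => Real.log (S ω) from rfl]
  rw [hfinal]
  exact mul_le_mul_of_nonneg_left key (le_of_lt (inv_pos.mpr hnpos))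
end

section
/- Suppose asset j is dominant and let K ∈ 𝒦 with K_j ∈ (0,1]. Then for every n ≥ 1 the quantity appearing in the sharpened upper bound is nonnegative: log(1/K_j) − 1 + K_j·E[ R_{n,j} / (Kᵀ R_n) ] ≥ 0. -/
open MeasureTheory ProbabilityTheory Filter Topology Finset Real

/-- Nonnegativity of the quantity appearing in the sharpened upper bound: if asset `j` is
dominant and `K_j ∈ (0,1]`, then `log(1/K_j) - 1 + K_j · E[R_{n,j}/(Kᵀ R_n)] ≥ 0`. -/
theorem sharp_upper_bound_nonneg
    {Ω : Type*} [MeasureSpace Ω] [IsProbabilityMeasure (ℙ : Measure Ω)]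
    {m : ℕ} (hm : 2 ≤ m)
    (X : ℕ → Ω → Fin m → ℝ)
    (hmeas : ∀ k, Measurable (X k))
    (hiid : iIndepFun X ℙ)
    (hident : ∀ k, IdentDistrib (X k) (X 0) ℙ ℙ)
    (Xmin Xmax : Fin m → ℝ)
    (hXmin : ∀ i, -1 < Xmin i)
    (hbdd : ∀ k, ∀ᵐ ω ∂(ℙ : Measure Ω), ∀ i, Xmin i ≤ X k ω i ∧ X k ω i ≤ Xmax i)
    (j : Fin m)
    (hdom : ∀ i, i ≠ j → ∫ ω, (1 + X 0 ω i) / (1 + X 0 ω j) ≤ 1)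
    (K : Fin m → ℝ) (hK : K ∈ simplex m) (hKj : K j ∈ Set.Ioc (0 : ℝ) 1) :
    ∀ n : ℕ, 1 ≤ n →
      0 ≤ Real.log (1 / K j) - 1 +
        K j * ∫ ω, compoundReturn X n ω j / ∑ i, K i * compoundReturn X n ω i := by
  obtain ⟨hK0, hKsum⟩ := hK
  obtain ⟨hKjpos, hKjle⟩ := hKj
  intro n hn
  classical
  -- component measurability
  have hXm : ∀ k i, Measurable (fun ω => X k ω i) :=
    fun k i => (measurable_pi_apply i).comp (hmeas k)
  -- per-period ratio functions
  set f : Fin m → ℕ → Ω → ℝ := fun i k ω => (1 + X k ω i) / (1 + X k ω j) with hfdef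
  have hfmeas : ∀ i k, Measurable (f i k) := fun i k =>
    (measurable_const.add (hXm k i)).div (measurable_const.add (hXm k j))
  have hgood : ∀ᵐ ω ∂(ℙ : Measure Ω), ∀ k i, Xmin i ≤ X k ω i ∧ X k ω i ≤ Xmax i :=
    ae_all_iff.mpr hbdd
  have hXminpos : ∀ i, (0:ℝ) < 1 + Xmin i := fun i => by linarith [hXmin i]
  set C : Fin m → ℝ := fun i => (1 + Xmax i) / (1 + Xmin j) with hCdef
  have hfbd : ∀ i k, ∀ᵐ ω ∂(ℙ : Measure Ω), 0 < f i k ω ∧ f i k ω ≤ C i := by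
    intro i k
    filter_upwards [hgood] with ω hω
    have h1 : 0 < 1 + X k ω i := lt_of_lt_of_le (hXminpos i) (by linarith [(hω k i).1])
    have h2 : 0 < 1 + X k ω j := lt_of_lt_of_le (hXminpos j) (by linarith [(hω k j).1])
    refine ⟨div_pos h1 h2, ?_⟩
    exact div_le_div₀ (by linarith [(hω k i).2, hXminpos i]) (by linarith [(hω k i).2])
      (hXminpos j) (by linarith [(hω k j).1])
  have hC0 : ∀ i, 0 < C i := by
    intro i
    obtain ⟨ω, hω⟩ := (hfbd i 0).exists
    exact lt_of_lt_of_le hω.1 hω.2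
  have hfint : ∀ i k, Integrable (f i k) ℙ := by
    intro i k
    refine ⟨(hfmeas i k).aestronglyMeasurable, HasFiniteIntegral.of_bounded (C := C i) ?_⟩
    filter_upwards [hfbd i k] with ω hω
    rw [Real.norm_eq_abs, abs_of_pos hω.1]; exact hω.2
  -- independence of the ratios across periods
  have hfind : ∀ i, iIndepFun
      (fun k => f i k) ℙ := by
    intro i
    exact hiid.comp (fun _ v => (1 + v i) / (1 + v j)) (fun _ =>
      (measurable_const.add (measurable_pi_apply i)).div
        (measurable_const.add (measurable_pi_apply j)))
  -- identical distribution of the ratios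
  have hfid : ∀ i k, ∫ ω, f i k ω = ∫ ω, f i 0 ω := by
    intro i k
    exact ((hident k).comp ((measurable_const.add (measurable_pi_apply i)).div
      (measurable_const.add (measurable_pi_apply j)))).integral_eq
  set c : Fin m → ℝ := fun i => ∫ ω, f i 0 ω with hcdef
  have hc0 : ∀ i, 0 ≤ c i := fun i =>
    integral_nonneg_of_ae ((hfbd i 0).mono fun ω h => h.1.le)
  have hc1 : ∀ i, c i ≤ 1 := by
    intro i
    by_cases hij : i = j
    · subst hij
      have h1 : f i 0 =ᵐ[ℙ] fun _ => (1:ℝ) := by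
        filter_upwards [hgood] with ω hω
        have h2 : 0 < 1 + X 0 ω i := lt_of_lt_of_le (hXminpos i) (by linarith [(hω 0 i).1])
        simp [hfdef, div_self (ne_of_gt h2)]
      rw [hcdef]
      simp only [integral_congr_ae h1, integral_const, probReal_univ, ENNReal.toReal_one, smul_eq_mul,
        one_mul]
      exact le_refl 1
    · exact hdom i hij
  -- integrability and value of products of ratios
  have hPmeas : ∀ i N, Measurable (fun ω => ∏ k ∈ Finset.range N, f i k ω) := fun i N =>
    Finset.measurable_prod _ fun k _ => hfmeas i k
  have hPint : ∀ i N, Integrable (fun ω => ∏ k ∈ Finset.range N, f i k ω) ℙ := by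
    intro i N
    refine ⟨(hPmeas i N).aestronglyMeasurable,
      HasFiniteIntegral.of_bounded (C := C i ^ N) ?_⟩
    filter_upwards [ae_all_iff.mpr (fun k => hfbd i k)] with ω hω
    rw [Real.norm_eq_abs, abs_of_nonneg (Finset.prod_nonneg fun k _ => (hω k).1.le)]
    calc ∏ k ∈ Finset.range N, f i k ω ≤ ∏ _k ∈ Finset.range N, C i :=
          Finset.prod_le_prod (fun k _ => (hω k).1.le) (fun k _ => (hω k).2)
      _ = C i ^ N := by rw [Finset.prod_const, Finset.card_range]
  have hPval : ∀ i N, (∫ ω, ∏ k ∈ Finset.range N, f i k ω) = c i ^ N := by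
    intro i N
    induction N with
    | zero => simp
    | succ N ih =>
      have hind : IndepFun (∏ k ∈ Finset.range N, f i k) (f i N) ℙ :=
        (hfind i).indepFun_prod_range_succ (fun k => hfmeas i k) N
      have heq : (∏ k ∈ Finset.range N, f i k) = fun ω => ∏ k ∈ Finset.range N, f i k ω :=
        funext fun ω => Finset.prod_apply ω (Finset.range N) (f i)
      rw [heq] at hind
      have hmul := IndepFun.integral_fun_mul_eq_mul_integral hind
        ((hPmeas i N).aestronglyMeasurable (μ := ℙ)) ((hfmeas i N).aestronglyMeasurable)
      calc ∫ ω, ∏ k ∈ Finset.range (N+1), f i k ω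
          = ∫ ω, (∏ k ∈ Finset.range N, f i k ω) * f i N ω := by
            simp_rw [Finset.prod_range_succ]
        _ = (∫ ω, ∏ k ∈ Finset.range N, f i k ω) * ∫ ω, f i N ω := hmul
        _ = c i ^ N * c i := by rw [ih, hfid i N]
        _ = c i ^ (N+1) := (pow_succ _ _).symm
  -- ratios of compound returns
  have hratio : ∀ i ω, compoundReturn X n ω i / compoundReturn X n ω j
      = ∏ k ∈ Finset.range n, f i k ω := by
    intro i ω
    rw [compoundReturn, compoundReturn, ← Finset.prod_div_distrib]
  -- measurability of compound returns
  have hRmeas : ∀ i, Measurable (fun ω => compoundReturn X n ω i) := by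
    intro i
    unfold compoundReturn
    exact Finset.measurable_prod _ fun k _ => measurable_const.add (hXm k i)
  set S : Ω → ℝ := fun ω => ∑ i, K i * compoundReturn X n ω i with hSdef
  have hSmeas : Measurable S := Finset.measurable_sum _ fun i _ => (hRmeas i).const_mul _
  have hgoodn : ∀ᵐ ω ∂(ℙ : Measure Ω), (∀ i, 0 < compoundReturn X n ω i) ∧
      K j * compoundReturn X n ω j ≤ S ω := by
    filter_upwards [hgood] with ω hω
    have hRpos : ∀ i, 0 < compoundReturn X n ω i := by
      intro i
      exact Finset.prod_pos fun k _ =>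
        lt_of_lt_of_le (hXminpos i) (by linarith [(hω k i).1])
    refine ⟨hRpos, ?_⟩
    exact Finset.single_le_sum (f := fun i => K i * compoundReturn X n ω i)
      (fun i _ => mul_nonneg (hK0 i) (hRpos i).le) (Finset.mem_univ j)
  set I1 : Ω → ℝ := fun ω => compoundReturn X n ω j / S ω with hI1def
  have intI1 : Integrable I1 ℙ := by
    refine ⟨((hRmeas j).div hSmeas).aestronglyMeasurable,
      HasFiniteIntegral.of_bounded (C := 1 / K j) ?_⟩
    filter_upwards [hgoodn] with ω hω
    have hS : 0 < S ω := lt_of_lt_of_le (mul_pos hKjpos (hω.1 j)) hω.2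
    rw [Real.norm_eq_abs, abs_of_nonneg (div_nonneg (hω.1 j).le hS.le)]
    rw [div_le_div_iff₀ hS hKjpos]
    nlinarith [hω.2, hω.1 j]
  set I2 : Ω → ℝ := fun ω => ∑ i, K i * ∏ k ∈ Finset.range n, f i k ω with hI2def
  have intI2 : Integrable I2 ℙ :=
    integrable_finset_sum _ fun i _ => (hPint i n).const_mul (K i)
  have hI2val : ∫ ω, I2 ω = ∑ i, K i * c i ^ n := by
    rw [hI2def, integral_finset_sum _ fun i _ => (hPint i n).const_mul (K i)]
    refine Finset.sum_congr rfl fun i _ => ?_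
    rw [integral_const_mul, hPval i n]
  have hI2le : ∫ ω, I2 ω ≤ 1 := by
    rw [hI2val, ← hKsum]
    refine Finset.sum_le_sum fun i _ => ?_
    calc K i * c i ^ n ≤ K i * 1 := by
          refine mul_le_mul_of_nonneg_left ?_ (hK0 i)
          exact pow_le_one₀ (hc0 i) (hc1 i)
      _ = K i := mul_one _
  have hpt : ∀ᵐ ω ∂(ℙ : Measure Ω), 2 - I2 ω ≤ I1 ω := by
    filter_upwards [hgoodn] with ω hω
    have hRj : 0 < compoundReturn X n ω j := hω.1 j
    have hS : 0 < S ω := lt_of_lt_of_le (mul_pos hKjpos hRj) hω.2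
    have hI2eq : I2 ω = S ω / compoundReturn X n ω j := by
      rw [hI2def, hSdef]
      simp only [Finset.sum_div]
      refine Finset.sum_congr rfl fun i _ => ?_
      rw [mul_div_assoc, hratio i ω]
    rw [hI2eq, hI1def]
    rw [sub_le_iff_le_add, div_add_div _ _ (ne_of_gt hS) (ne_of_gt hRj),
      le_div_iff₀ (mul_pos hS hRj)]
    nlinarith [sq_nonneg (S ω - compoundReturn X n ω j)]
  have hI1ge : 1 ≤ ∫ ω, I1 ω := by
    have h₁ : ∫ ω, (2 - I2 ω) ≤ ∫ ω, I1 ω :=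
      integral_mono_ae ((integrable_const 2).sub intI2) intI1 hpt
    rw [integral_sub (integrable_const 2) intI2, integral_const, probReal_univ] at h₁
    simp only [ENNReal.toReal_one, smul_eq_mul, one_mul] at h₁
    linarith
  have hlog : Real.log (K j) ≤ K j - 1 := Real.log_le_sub_one_of_pos hKjpos
  have hfin : (∫ ω, compoundReturn X n ω j / ∑ i, K i * compoundReturn X n ω i) = ∫ ω, I1 ω := rfl
  rw [hfin, one_div, Real.log_inv]
  nlinarith [mul_le_mul_of_nonneg_left hI1ge hKjpos.le]
end
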